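/- If an atomic flow B is cycle-free and B →_se C, then C is cycle-free. -/

import Mathlib

set_option linter.unusedVariables false

namespace AF

/-! ### Formulae of system SKS.

Atoms are pairs `(n, b)`; the involution `ā` flips the Boolean, so it is
fixed-point free. -/

inductive Formula : Type
  | tt : Formula
  | ff : Formula
  | atom : ℕ → Bool → Formula
  | or : Formula → Formula → Formula
  | and : Formula → Formula → Formula
  deriving DecidableEq

namespace Formula

/-- Subformula at a position (`false` = left child, `true` = right child). -/
def sub : Formula → List Bool → Option Formula
  | φ, [] => some φ
  | .or α _, false :: p => sub α p
  | .or _ β, true :: p => sub β p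
  | .and α _, false :: p => sub α p
  | .and _ β, true :: p => sub β p
  | _, _ :: _ => none

/-- Replace the subformula at a position. -/
def repl : Formula → List Bool → Formula → Formula
  | _, [], ψ => ψ
  | .or α β, false :: p, ψ => .or (repl α p ψ) β
  | .or α β, true :: p, ψ => .or α (repl β p ψ)
  | .and α β, false :: p, ψ => .and (repl α p ψ) β
  | .and α β, true :: p, ψ => .and α (repl β p ψ)
  | φ, _ :: _, _ => φ

/-- `p` is an atom occurrence of `φ`. -/
def IsOcc (φ : Formula) (p : List Bool) : Prop :=
  ∃ n b, φ.sub p = some (.atom n b)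

end Formula

/-! ### Inference rules.

The rule `=` of SKS replaces a formula by an equivalent one under
commutativity, associativity and the unit equations; each single instance of
`=` applies one equation (in either direction), so we list the equations as
individual rule names, all marked as being instances of `=` via `isEq`. -/

inductive RuleName : Type
  | aiDown | aiUp | awDown | awUp | acDown | acUp
  | s | m
  | eqOrComm | eqAndComm
  | eqOrAssocL | eqOrAssocR | eqAndAssocL | eqAndAssocR
  | eqOrUnitDel | eqOrUnitAdd | eqAndUnitDel | eqAndUnitAdd
  | eqTTDel | eqTTAdd | eqFFDel | eqFFAdd
  deriving DecidableEq

namespace RuleName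

/-- The atomic structural rules. -/
def isStructural : RuleName → Bool
  | .aiDown | .aiUp | .awDown | .awUp | .acDown | .acUp => true
  | _ => false

/-- The rule names that are instances of the rule `=`. -/
def isEq : RuleName → Bool
  | .aiDown | .aiUp | .awDown | .awUp | .acDown | .acUp | .s | .m => false
  | _ => true

end RuleName

/-- Rule instances (redex ⟹ contractum). -/
inductive RuleInstance : RuleName → Formula → Formula → Prop
  | aiDown (n : ℕ) (b : Bool) :
      RuleInstance .aiDown .tt (.or (.atom n b) (.atom n (!b)))
  | aiUp (n : ℕ) (b : Bool) :
      RuleInstance .aiUp (.and (.atom n b) (.atom n (!b))) .ff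
  | awDown (n : ℕ) (b : Bool) : RuleInstance .awDown .ff (.atom n b)
  | awUp (n : ℕ) (b : Bool) : RuleInstance .awUp (.atom n b) .tt
  | acDown (n : ℕ) (b : Bool) :
      RuleInstance .acDown (.or (.atom n b) (.atom n b)) (.atom n b)
  | acUp (n : ℕ) (b : Bool) :
      RuleInstance .acUp (.atom n b) (.and (.atom n b) (.atom n b))
  | s (α β γ : Formula) :
      RuleInstance .s (.and α (.or β γ)) (.or (.and α β) γ)
  | m (α β γ δ : Formula) :
      RuleInstance .m (.or (.and α β) (.and γ δ)) (.and (.or α γ) (.or β δ))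
  | eqOrComm (α β : Formula) : RuleInstance .eqOrComm (.or α β) (.or β α)
  | eqAndComm (α β : Formula) : RuleInstance .eqAndComm (.and α β) (.and β α)
  | eqOrAssocL (α β γ : Formula) :
      RuleInstance .eqOrAssocL (.or (.or α β) γ) (.or α (.or β γ))
  | eqOrAssocR (α β γ : Formula) :
      RuleInstance .eqOrAssocR (.or α (.or β γ)) (.or (.or α β) γ)
  | eqAndAssocL (α β γ : Formula) :
      RuleInstance .eqAndAssocL (.and (.and α β) γ) (.and α (.and β γ))
  | eqAndAssocR (α β γ : Formula) :
      RuleInstance .eqAndAssocR (.and α (.and β γ)) (.and (.and α β) γ)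
  | eqOrUnitDel (α : Formula) : RuleInstance .eqOrUnitDel (.or α .ff) α
  | eqOrUnitAdd (α : Formula) : RuleInstance .eqOrUnitAdd α (.or α .ff)
  | eqAndUnitDel (α : Formula) : RuleInstance .eqAndUnitDel (.and α .tt) α
  | eqAndUnitAdd (α : Formula) : RuleInstance .eqAndUnitAdd α (.and α .tt)
  | eqTTDel : RuleInstance .eqTTDel (.or .tt .tt) .tt
  | eqTTAdd : RuleInstance .eqTTAdd .tt (.or .tt .tt)
  | eqFFDel : RuleInstance .eqFFDel (.and .ff .ff) .ff
  | eqFFAdd : RuleInstance .eqFFAdd .ff (.and .ff .ff)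

/-- One (deep) inference step applying rule `r` at position `q`. -/
def StepAt (r : RuleName) (q : List Bool) (φ ψ : Formula) : Prop :=
  ∃ γ δ, φ.sub q = some γ ∧ RuleInstance r γ δ ∧ ψ = φ.repl q δ

/-- One inference step using a rule from the set `S`. -/
def Step (S : Set RuleName) (φ ψ : Formula) : Prop :=
  ∃ r ∈ S, ∃ q, StepAt r q φ ψ

/-- There is a derivation from `φ` to `ψ` using only rules from `S`. -/
def Derives (S : Set RuleName) : Formula → Formula → Prop :=
  Relation.ReflTransGen (Step S)

/-! ### Derivations as explicit data (for the theory of atomic flows). -/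

/-- A derivation: a premiss and a chain of steps, each recorded by its rule
name, the position of the redex, and the resulting formula. -/
structure Deriv : Type where
  prem : Formula
  steps : List (RuleName × List Bool × Formula)

namespace Deriv

/-- The `i`-th step datum. -/
def stepAt (Φ : Deriv) (i : ℕ) : RuleName × List Bool × Formula :=
  Φ.steps.getD i (RuleName.s, ([] : List Bool), Formula.tt)

/-- The `i`-th formula of the derivation (`0` is the premiss). -/
def fml (Φ : Deriv) (i : ℕ) : Formula :=
  (Φ.prem :: Φ.steps.map (fun t => t.2.2)).getD i Φ.prem

/-- Number of formulae in the derivation. -/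
def nf (Φ : Deriv) : ℕ := Φ.steps.length + 1

/-- The conclusion of the derivation. -/
def concl (Φ : Deriv) : Formula := Φ.fml Φ.steps.length

/-- The derivation is well formed: every recorded step is a correct
inference step of SKS. -/
def WF (Φ : Deriv) : Prop :=
  ∀ i, i < Φ.steps.length →
    StepAt (Φ.stepAt i).1 (Φ.stepAt i).2.1 (Φ.fml i) (Φ.fml (i + 1))

end Deriv

/-! ### Atomic flows. -/

inductive FlowLabel : Type
  | aiDown | aiUp | awDown | awUp | acDown | acUp
  deriving DecidableEq

/-- Required (number of lower edges, number of upper edges) of a vertex. -/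
def labDeg : FlowLabel → ℕ × ℕ
  | .aiDown => (2, 0)
  | .aiUp => (0, 2)
  | .awDown => (1, 0)
  | .awUp => (0, 1)
  | .acDown => (1, 2)
  | .acUp => (2, 1)

/-- The data of an atomic flow: vertices, edges, labels, and the two
endpoint maps.  `up e = none` means the upper endpoint is `⊤`, and
`lo e = none` means the lower endpoint is `⊥`. -/
structure PreFlow : Type where
  V : Finset ℕ
  E : Finset ℕ
  η : ℕ → FlowLabel
  up : ℕ → Option ℕ
  lo : ℕ → Option ℕ

namespace PreFlow

/-- Lower edges of a vertex. -/
def Ledges (F : PreFlow) (v : ℕ) : Finset ℕ :=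
  F.E.filter (fun e => F.up e = some v)

/-- Upper edges of a vertex. -/
def Uedges (F : PreFlow) (v : ℕ) : Finset ℕ :=
  F.E.filter (fun e => F.lo e = some v)

/-- All edges of a vertex. -/
def edges (F : PreFlow) (v : ℕ) : Finset ℕ := F.Ledges v ∪ F.Uedges v

def degOK (F : PreFlow) : Prop :=
  ∀ v ∈ F.V, (F.Ledges v).card = (labDeg (F.η v)).1 ∧
    (F.Uedges v).card = (labDeg (F.η v)).2

def endpointsOK (F : PreFlow) : Prop :=
  ∀ e ∈ F.E, (∀ v, F.up e = some v → v ∈ F.V) ∧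
    (∀ v, F.lo e = some v → v ∈ F.V)

/-- No cyclic sequence of edges `ε₁, …, ε_h` with
`up (ε_i) = lo (ε_(i+1 mod h))`. -/
def Acyclic (F : PreFlow) : Prop :=
  ¬ ∃ (h : ℕ) (ε : Fin (h + 1) → ℕ), (∀ i, ε i ∈ F.E) ∧
      ∀ i : Fin (h + 1), (F.up (ε i)).isSome ∧ F.up (ε i) = F.lo (ε (i + 1))

/-- `π` is a polarity assignment (`false` = `−`, `true` = `+`). -/
def PolarityOK (F : PreFlow) (π : ℕ → Bool) : Prop :=
  ∀ v ∈ F.V,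
    ((F.η v = .acDown ∨ F.η v = .acUp) →
      ∀ e₁ ∈ F.edges v, ∀ e₂ ∈ F.edges v, π e₁ = π e₂) ∧
    ((F.η v = .aiDown ∨ F.η v = .aiUp) →
      ∃ e₁ ∈ F.edges v, ∃ e₂ ∈ F.edges v, π e₁ ≠ π e₂)

/-- `F` is an atomic flow. -/
def IsFlow (F : PreFlow) : Prop :=
  F.degOK ∧ F.endpointsOK ∧ F.Acyclic ∧ ∃ π, F.PolarityOK π

end PreFlow

/-! ### Paths, ai-paths, cycles. -/

/-- An endpoint of a path: a vertex, or `⊤`, or `⊥`. -/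
inductive VPt : Type
  | ver : ℕ → VPt
  | top : VPt
  | bot : VPt
  deriving DecidableEq

/-- The upper endpoint of edge `e` is `ν`. -/
def srcOK (F : PreFlow) (ν : VPt) (e : ℕ) : Prop :=
  match ν with
  | .ver v => F.up e = some v
  | .top => F.up e = none
  | .bot => False

/-- The lower endpoint of edge `e` is `ν`. -/
def tgtOK (F : PreFlow) (ν : VPt) (e : ℕ) : Prop :=
  match ν with
  | .ver v => F.lo e = some v
  | .bot => F.lo e = none
  | .top => False

/-- A downward path from `ν` to `ν'` (a nonempty sequence of edges, each
hanging from the lower endpoint of the previous one). -/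
def IsDownPath (F : PreFlow) (ν ν' : VPt) (l : List ℕ) : Prop :=
  l ≠ [] ∧ (∀ e ∈ l, e ∈ F.E) ∧
  (∀ i, i + 1 < l.length →
    ∃ v ∈ F.V, F.lo (l.getD i 0) = some v ∧ F.up (l.getD (i + 1) 0) = some v) ∧
  srcOK F ν (l.getD 0 0) ∧ tgtOK F ν' (l.getD (l.length - 1) 0)

/-- A path from `ν` to `ν'`: a downward path, or the reverse of a
downward path from `ν'` to `ν`. -/
def IsPath (F : PreFlow) (ν ν' : VPt) (l : List ℕ) : Prop :=
  IsDownPath F ν ν' l ∨ IsDownPath F ν' ν l.reverse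

/-- ai-paths: paths, closed under concatenation (in distinct edges) at
interaction and cointeraction vertices. -/
inductive AIPath (F : PreFlow) : VPt → VPt → List ℕ → Prop
  | single {ν ν' : VPt} {l : List ℕ} : IsPath F ν ν' l → AIPath F ν ν' l
  | join {ν ν' : VPt} {v : ℕ} {l₁ l₂ : List ℕ} {e e' : ℕ} :
      v ∈ F.V → (F.η v = .aiDown ∨ F.η v = .aiUp) →
      AIPath F ν (.ver v) (l₁ ++ [e]) →
      AIPath F (.ver v) ν' (e' :: l₂) →
      e ≠ e' →
      AIPath F ν ν' (l₁ ++ [e] ++ e' :: l₂)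

/-- The flow contains an ai-cycle: an ai-path from a vertex to itself in
which no edge appears twice. -/
def HasAICycle (F : PreFlow) : Prop :=
  ∃ v l, v ∈ F.V ∧ AIPath F (.ver v) (.ver v) l ∧ l.Nodup

def CycleFree (F : PreFlow) : Prop := ¬ HasAICycle F

/-- An ai-connection: a path from an interaction vertex to a cointeraction
vertex or vice versa. -/
def IsConnection (F : PreFlow) (l : List ℕ) : Prop :=
  ∃ v v', v ∈ F.V ∧ v' ∈ F.V ∧
    ((F.η v = .aiDown ∧ F.η v' = .aiUp) ∨
     (F.η v = .aiUp ∧ F.η v' = .aiDown)) ∧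
    IsPath F (.ver v) (.ver v') l

/-- A simple edge: an ai-connection consisting of a single edge. -/
def SimpleEdge (F : PreFlow) (e : ℕ) : Prop := IsConnection F [e]

/-- A clean path: an ai-path all of whose ai-connections are simple edges. -/
def IsCleanPath (F : PreFlow) (ν ν' : VPt) (l : List ℕ) : Prop :=
  AIPath F ν ν' l ∧
  ∀ l₁ l₂ l₃, l = l₁ ++ l₂ ++ l₃ → IsConnection F l₂ → l₂.length = 1

/-! ### Local flow reduction rules. -/

open PreFlow

/-- Rule `w↓-c↓`: a weakening feeding a contraction is erased, merging the
contraction's other two edges. -/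
def RedWdCd (A B : PreFlow) : Prop :=
  ∃ v₁ v₂ e e₂ e₃,
    v₁ ∈ A.V ∧ v₂ ∈ A.V ∧ v₁ ≠ v₂ ∧
    A.η v₁ = .awDown ∧ A.η v₂ = .acDown ∧
    e ∈ A.E ∧ e₂ ∈ A.E ∧ e₃ ∈ A.E ∧ e ≠ e₂ ∧ e ≠ e₃ ∧ e₂ ≠ e₃ ∧
    A.up e = some v₁ ∧ A.lo e = some v₂ ∧
    A.lo e₂ = some v₂ ∧ A.up e₃ = some v₂ ∧
    B.V = (A.V.erase v₁).erase v₂ ∧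
    B.E = (A.E.erase e).erase e₃ ∧
    B.η = A.η ∧ B.up = A.up ∧
    B.lo = Function.update A.lo e₂ (A.lo e₃)

/-- Rule `c↑-w↑` (dual of `w↓-c↓`). -/
def RedCuWu (A B : PreFlow) : Prop :=
  ∃ v₁ v₂ e e₂ e₃,
    v₁ ∈ A.V ∧ v₂ ∈ A.V ∧ v₁ ≠ v₂ ∧
    A.η v₁ = .awUp ∧ A.η v₂ = .acUp ∧
    e ∈ A.E ∧ e₂ ∈ A.E ∧ e₃ ∈ A.E ∧ e ≠ e₂ ∧ e ≠ e₃ ∧ e₂ ≠ e₃ ∧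
    A.lo e = some v₁ ∧ A.up e = some v₂ ∧
    A.up e₂ = some v₂ ∧ A.lo e₃ = some v₂ ∧
    B.V = (A.V.erase v₁).erase v₂ ∧
    B.E = (A.E.erase e).erase e₃ ∧
    B.η = A.η ∧ B.lo = A.lo ∧
    B.up = Function.update A.up e₂ (A.up e₃)

/-- Rule `w↓-i↑`: a weakening feeding a cointeraction is replaced by a
coweakening on the other cointeraction edge. -/
def RedWdIu (A B : PreFlow) : Prop :=
  ∃ v₁ v₂ e e₂,
    v₁ ∈ A.V ∧ v₂ ∈ A.V ∧ v₁ ≠ v₂ ∧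
    A.η v₁ = .awDown ∧ A.η v₂ = .aiUp ∧
    e ∈ A.E ∧ e₂ ∈ A.E ∧ e ≠ e₂ ∧
    A.up e = some v₁ ∧ A.lo e = some v₂ ∧ A.lo e₂ = some v₂ ∧
    B.V = A.V.erase v₁ ∧ B.E = A.E.erase e ∧
    B.η = Function.update A.η v₂ .awUp ∧
    B.up = A.up ∧ B.lo = A.lo

/-- Rule `i↓-w↑` (dual of `w↓-i↑`). -/
def RedIdWu (A B : PreFlow) : Prop :=
  ∃ v₁ v₂ e e₂,
    v₁ ∈ A.V ∧ v₂ ∈ A.V ∧ v₁ ≠ v₂ ∧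
    A.η v₁ = .awUp ∧ A.η v₂ = .aiDown ∧
    e ∈ A.E ∧ e₂ ∈ A.E ∧ e ≠ e₂ ∧
    A.lo e = some v₁ ∧ A.up e = some v₂ ∧ A.up e₂ = some v₂ ∧
    B.V = A.V.erase v₁ ∧ B.E = A.E.erase e ∧
    B.η = Function.update A.η v₂ .awDown ∧
    B.up = A.up ∧ B.lo = A.lo

/-- Rule `w↓-w↑`: a weakening joined to a coweakening is erased. -/
def RedWdWu (A B : PreFlow) : Prop :=
  ∃ v₁ v₂ e,
    v₁ ∈ A.V ∧ v₂ ∈ A.V ∧ v₁ ≠ v₂ ∧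
    A.η v₁ = .awDown ∧ A.η v₂ = .awUp ∧
    e ∈ A.E ∧ A.up e = some v₁ ∧ A.lo e = some v₂ ∧
    B.V = (A.V.erase v₁).erase v₂ ∧ B.E = A.E.erase e ∧
    B.η = A.η ∧ B.up = A.up ∧ B.lo = A.lo

/-- Rule `w↓-c↑`: a weakening feeding a cocontraction is replaced by two
weakenings. -/
def RedWdCu (A B : PreFlow) : Prop :=
  ∃ v₁ v₂ e e₁ e₂,
    v₁ ∈ A.V ∧ v₂ ∈ A.V ∧ v₁ ≠ v₂ ∧
    A.η v₁ = .awDown ∧ A.η v₂ = .acUp ∧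
    e ∈ A.E ∧ e₁ ∈ A.E ∧ e₂ ∈ A.E ∧ e ≠ e₁ ∧ e ≠ e₂ ∧ e₁ ≠ e₂ ∧
    A.up e = some v₁ ∧ A.lo e = some v₂ ∧
    A.up e₁ = some v₂ ∧ A.up e₂ = some v₂ ∧
    B.V = A.V ∧ B.E = A.E.erase e ∧
    B.η = Function.update A.η v₂ .awDown ∧
    B.up = Function.update A.up e₁ (some v₁) ∧
    B.lo = A.lo

/-- Rule `c↓-w↑` (dual of `w↓-c↑`). -/
def RedCdWu (A B : PreFlow) : Prop :=
  ∃ v₁ v₂ e e₁ e₂,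
    v₁ ∈ A.V ∧ v₂ ∈ A.V ∧ v₁ ≠ v₂ ∧
    A.η v₁ = .awUp ∧ A.η v₂ = .acDown ∧
    e ∈ A.E ∧ e₁ ∈ A.E ∧ e₂ ∈ A.E ∧ e ≠ e₁ ∧ e ≠ e₂ ∧ e₁ ≠ e₂ ∧
    A.lo e = some v₁ ∧ A.up e = some v₂ ∧
    A.lo e₁ = some v₂ ∧ A.lo e₂ = some v₂ ∧
    B.V = A.V ∧ B.E = A.E.erase e ∧
    B.η = Function.update A.η v₂ .awUp ∧
    B.lo = Function.update A.lo e₁ (some v₁) ∧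
    B.up = A.up

/-- Rule `c↓-i↑`: a contraction whose output edge enters a cointeraction is
replaced by a cocontraction on the other cointeraction edge followed by two
cointeractions. -/
def RedCdIu (A B : PreFlow) : Prop :=
  ∃ v₁ v₂ v₃ e e₁ e₂ e₃ g₁ g₂,
    v₁ ∈ A.V ∧ v₂ ∈ A.V ∧ v₁ ≠ v₂ ∧ v₃ ∉ A.V ∧
    A.η v₁ = .acDown ∧ A.η v₂ = .aiUp ∧
    e ∈ A.E ∧ e₁ ∈ A.E ∧ e₂ ∈ A.E ∧ e₃ ∈ A.E ∧
    e ≠ e₁ ∧ e ≠ e₂ ∧ e ≠ e₃ ∧ e₁ ≠ e₂ ∧ e₁ ≠ e₃ ∧ e₂ ≠ e₃ ∧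
    g₁ ∉ A.E ∧ g₂ ∉ A.E ∧ g₁ ≠ g₂ ∧
    A.lo e₁ = some v₁ ∧ A.lo e₂ = some v₁ ∧
    A.up e = some v₁ ∧ A.lo e = some v₂ ∧ A.lo e₃ = some v₂ ∧
    B.V = insert v₃ A.V ∧
    B.E = insert g₁ (insert g₂ (A.E.erase e)) ∧
    B.η = Function.update (Function.update A.η v₁ .acUp) v₃ .aiUp ∧
    B.up = Function.update (Function.update A.up g₁ (some v₁)) g₂ (some v₁) ∧
    B.lo = Function.update (Function.update (Function.update
      (Function.update (Function.update A.lo e₁ (some v₂)) e₂ (some v₃))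
        e₃ (some v₁)) g₁ (some v₂)) g₂ (some v₃)

/-- Rule `i↓-c↑` (dual of `c↓-i↑`). -/
def RedIdCu (A B : PreFlow) : Prop :=
  ∃ v₁ v₂ v₃ e e₁ e₂ e₃ g₁ g₂,
    v₁ ∈ A.V ∧ v₂ ∈ A.V ∧ v₁ ≠ v₂ ∧ v₃ ∉ A.V ∧
    A.η v₁ = .acUp ∧ A.η v₂ = .aiDown ∧
    e ∈ A.E ∧ e₁ ∈ A.E ∧ e₂ ∈ A.E ∧ e₃ ∈ A.E ∧
    e ≠ e₁ ∧ e ≠ e₂ ∧ e ≠ e₃ ∧ e₁ ≠ e₂ ∧ e₁ ≠ e₃ ∧ e₂ ≠ e₃ ∧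
    g₁ ∉ A.E ∧ g₂ ∉ A.E ∧ g₁ ≠ g₂ ∧
    A.up e₁ = some v₁ ∧ A.up e₂ = some v₁ ∧
    A.lo e = some v₁ ∧ A.up e = some v₂ ∧ A.up e₃ = some v₂ ∧
    B.V = insert v₃ A.V ∧
    B.E = insert g₁ (insert g₂ (A.E.erase e)) ∧
    B.η = Function.update (Function.update A.η v₁ .acDown) v₃ .aiDown ∧
    B.lo = Function.update (Function.update A.lo g₁ (some v₁)) g₂ (some v₁) ∧
    B.up = Function.update (Function.update (Function.update
      (Function.update (Function.update A.up e₁ (some v₂)) e₂ (some v₃))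
        e₃ (some v₁)) g₁ (some v₂)) g₂ (some v₃)

/-- Rule `c↓-c↑`: a contraction whose output enters a cocontraction is
replaced by two cocontractions above two contractions, crosswise connected. -/
def RedCdCu (A B : PreFlow) : Prop :=
  ∃ v₁ v₂ v₃ v₄ e e₁ e₂ e₃ e₄ g₁₁ g₁₂ g₂₁ g₂₂,
    v₁ ∈ A.V ∧ v₂ ∈ A.V ∧ v₁ ≠ v₂ ∧
    v₃ ∉ A.V ∧ v₄ ∉ A.V ∧ v₃ ≠ v₄ ∧
    A.η v₁ = .acDown ∧ A.η v₂ = .acUp ∧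
    e ∈ A.E ∧ e₁ ∈ A.E ∧ e₂ ∈ A.E ∧ e₃ ∈ A.E ∧ e₄ ∈ A.E ∧
    e ≠ e₁ ∧ e ≠ e₂ ∧ e ≠ e₃ ∧ e ≠ e₄ ∧
    e₁ ≠ e₂ ∧ e₁ ≠ e₃ ∧ e₁ ≠ e₄ ∧ e₂ ≠ e₃ ∧ e₂ ≠ e₄ ∧ e₃ ≠ e₄ ∧
    g₁₁ ∉ A.E ∧ g₁₂ ∉ A.E ∧ g₂₁ ∉ A.E ∧ g₂₂ ∉ A.E ∧
    g₁₁ ≠ g₁₂ ∧ g₁₁ ≠ g₂₁ ∧ g₁₁ ≠ g₂₂ ∧ g₁₂ ≠ g₂₁ ∧ g₁₂ ≠ g₂₂ ∧ g₂₁ ≠ g₂₂ ∧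
    A.lo e₁ = some v₁ ∧ A.lo e₂ = some v₁ ∧ A.up e = some v₁ ∧
    A.lo e = some v₂ ∧ A.up e₃ = some v₂ ∧ A.up e₄ = some v₂ ∧
    B.V = insert v₃ (insert v₄ A.V) ∧
    B.E = insert g₁₁ (insert g₁₂ (insert g₂₁ (insert g₂₂ (A.E.erase e)))) ∧
    B.η = Function.update (Function.update (Function.update
      (Function.update A.η v₁ .acUp) v₂ .acUp) v₃ .acDown) v₄ .acDown ∧
    B.up = Function.update (Function.update (Function.update
      (Function.update (Function.update (Function.update A.up
        e₃ (some v₃)) e₄ (some v₄)) g₁₁ (some v₁)) g₁₂ (some v₁))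
          g₂₁ (some v₂)) g₂₂ (some v₂) ∧
    B.lo = Function.update (Function.update (Function.update
      (Function.update (Function.update A.lo e₂ (some v₂)) g₁₁ (some v₃))
        g₁₂ (some v₄)) g₂₁ (some v₃)) g₂₂ (some v₄)

/-- One step of the flow rewriting system `w`. -/
def StepW (A B : PreFlow) : Prop :=
  RedWdCd A B ∨ RedCuWu A B ∨ RedWdIu A B ∨ RedIdWu A B ∨
  RedWdWu A B ∨ RedWdCu A B ∨ RedCdWu A B

/-- One step of the flow rewriting system `c`. -/
def StepC (A B : PreFlow) : Prop :=
  RedCdIu A B ∨ RedIdCu A B ∨ RedCdCu A B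

/-- `A` is normal for the flow rewriting system `w`. -/
def NormalW (A : PreFlow) : Prop := ¬ ∃ B, StepW A B

/-- `A` is normal for the flow rewriting system `c`. -/
def NormalC (A : PreFlow) : Prop := ¬ ∃ B, StepC A B

/-! ### Flow isomorphisms. -/

structure FlowIso (A B : PreFlow) : Type where
  vmap : ℕ → ℕ
  emap : ℕ → ℕ
  vbij : Set.BijOn vmap (A.V : Set ℕ) (B.V : Set ℕ)
  ebij : Set.BijOn emap (A.E : Set ℕ) (B.E : Set ℕ)
  lab : ∀ v ∈ A.V, B.η (vmap v) = A.η v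
  upc : ∀ e ∈ A.E, B.up (emap e) = (A.up e).map vmap
  loc : ∀ e ∈ A.E, B.lo (emap e) = (A.lo e).map vmap

/-! ### The global reduction `→se` (elimination of a simple edge). -/

/-- The flow obtained from `B` by eliminating the simple edge `e0` between
the interaction `vi` and the cointeraction `vc` (with `e2` the other lower
edge of `vi` and `e3` the other upper edge of `vc`): two copies (tags `0`,
hat, the lower one, and `1`, tilde, the upper one) of the remaining flow are
glued by identifying the hat copy of `e2` with the tilde copy of `e3`; a
weakening (vertex `(2,0)`) is placed above the tilde copy of `e2`, a
coweakening (vertex `(2,1)`) below the hat copy of `e3`; each upper edge `ε`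
of `B` gives a cocontraction (vertex `(3,ε)`, with a new upper edge `(3,ε)`)
joining the two copies of `ε`, and dually each lower edge `ε'` of `B` gives
a contraction (vertex `(4,ε')`, with a new lower edge `(4,ε')`). -/
def seFlow (B : PreFlow) (vi vc e0 e2 e3 : ℕ) : PreFlow :=
  { V := ((B.V.erase vi).erase vc).image (Nat.pair 0) ∪
         ((B.V.erase vi).erase vc).image (Nat.pair 1) ∪
         {Nat.pair 2 0, Nat.pair 2 1} ∪
         (B.E.filter (fun e => B.up e = none)).image (Nat.pair 3) ∪
         (B.E.filter (fun e => B.lo e = none)).image (Nat.pair 4),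
    E := (B.E.erase e0).image (Nat.pair 0) ∪
         (B.E.erase e0).image (fun e => if e = e3 then Nat.pair 0 e2 else Nat.pair 1 e) ∪
         (B.E.filter (fun e => B.up e = none)).image (Nat.pair 3) ∪
         (B.E.filter (fun e => B.lo e = none)).image (Nat.pair 4),
    η := fun x =>
      if (Nat.unpair x).1 = 2 then
        (if (Nat.unpair x).2 = 0 then FlowLabel.awDown else FlowLabel.awUp)
      else if (Nat.unpair x).1 = 3 then FlowLabel.acUp
      else if (Nat.unpair x).1 = 4 then FlowLabel.acDown
      else B.η (Nat.unpair x).2,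
    up := fun x =>
      let t := (Nat.unpair x).1
      let y := (Nat.unpair x).2
      if t = 0 then
        (if y = e2 then
          (match B.up e3 with
           | some v => some (Nat.pair 1 v)
           | none => some (Nat.pair 3 e3))
        else
          (match B.up y with
           | some v => some (Nat.pair 0 v)
           | none => some (Nat.pair 3 y)))
      else if t = 1 then
        (if y = e2 then some (Nat.pair 2 0)
        else
          (match B.up y with
           | some v => some (Nat.pair 1 v)
           | none => some (Nat.pair 3 y)))
      else if t = 3 then none
      else some (Nat.pair 4 y),
    lo := fun x =>
      let t := (Nat.unpair x).1
      let y := (Nat.unpair x).2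
      if t = 0 then
        (if y = e2 then
          (match B.lo e2 with
           | some v => some (Nat.pair 0 v)
           | none => some (Nat.pair 4 e2))
        else if y = e3 then some (Nat.pair 2 1)
        else
          (match B.lo y with
           | some v => some (Nat.pair 0 v)
           | none => some (Nat.pair 4 y)))
      else if t = 1 then
        (match B.lo y with
         | some v => some (Nat.pair 1 v)
         | none => some (Nat.pair 4 y))
      else if t = 3 then some (Nat.pair 3 y)
      else none }

/-- The reduction `→se`: elimination of a simple edge (up to flow
isomorphism). -/
def RedSE (B C : PreFlow) : Prop :=
  ∃ vi vc e0 e2 e3,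
    vi ∈ B.V ∧ vc ∈ B.V ∧ vi ≠ vc ∧
    B.η vi = .aiDown ∧ B.η vc = .aiUp ∧
    e0 ∈ B.E ∧ e2 ∈ B.E ∧ e3 ∈ B.E ∧
    e0 ≠ e2 ∧ e0 ≠ e3 ∧ e2 ≠ e3 ∧
    B.up e0 = some vi ∧ B.lo e0 = some vc ∧
    B.up e2 = some vi ∧ B.lo e3 = some vc ∧
    Nonempty (FlowIso C (seFlow B vi vc e0 e2 e3))

/-! ### The atomic flow associated with a derivation. -/

/-- Correspondence conditions for a linear rule applied at position `q`:
for each pair `(c₁, c₂)` in `cs`, occurrences at `q ++ c₁ ++ p` in the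
conclusion (formula `i+1`) are traced to occurrences at `q ++ c₂ ++ p` in
the premiss (formula `i`). -/
def corrCond (f : ℕ → List Bool → ℕ) (i : ℕ) (q : List Bool) (ψ : Formula)
    (cs : List (List Bool × List Bool)) : Prop :=
  ∀ c ∈ cs, ∀ p : List Bool, ψ.IsOcc (q ++ c.1 ++ p) →
    f (i + 1) (q ++ c.1 ++ p) = f i (q ++ c.2 ++ p)

/-- The tracing conditions for one inference step: occurrences in the
context are traced to the same edge, and the active occurrences of a
structural rule are related to the edges of the vertex `v` as prescribed by
its label, while the active occurrences of logical and `=` steps are traced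
to the same edges under the canonical correspondence. -/
def stepCond (A : PreFlow) (f : ℕ → List Bool → ℕ) (v : ℕ) (i : ℕ)
    (r : RuleName) (q : List Bool) (φ ψ : Formula) : Prop :=
  (∀ p, ¬ (q <+: p) → φ.IsOcc p → f (i + 1) p = f i p) ∧
  match r with
  | .aiDown =>
      A.η v = .aiDown ∧
      A.up (f (i + 1) (q ++ [false])) = some v ∧
      A.up (f (i + 1) (q ++ [true])) = some v ∧
      f (i + 1) (q ++ [false]) ≠ f (i + 1) (q ++ [true])
  | .aiUp =>
      A.η v = .aiUp ∧
      A.lo (f i (q ++ [false])) = some v ∧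
      A.lo (f i (q ++ [true])) = some v ∧
      f i (q ++ [false]) ≠ f i (q ++ [true])
  | .awDown => A.η v = .awDown ∧ A.up (f (i + 1) q) = some v
  | .awUp => A.η v = .awUp ∧ A.lo (f i q) = some v
  | .acDown =>
      A.η v = .acDown ∧
      A.lo (f i (q ++ [false])) = some v ∧
      A.lo (f i (q ++ [true])) = some v ∧
      A.up (f (i + 1) q) = some v ∧
      f i (q ++ [false]) ≠ f i (q ++ [true])
  | .acUp =>
      A.η v = .acUp ∧
      A.lo (f i q) = some v ∧
      A.up (f (i + 1) (q ++ [false])) = some v ∧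
      A.up (f (i + 1) (q ++ [true])) = some v ∧
      f (i + 1) (q ++ [false]) ≠ f (i + 1) (q ++ [true])
  | .s => corrCond f i q ψ
      [([false, false], [false]), ([false, true], [true, false]),
       ([true], [true, true])]
  | .m => corrCond f i q ψ
      [([false, false], [false, false]), ([true, false], [false, true]),
       ([false, true], [true, false]), ([true, true], [true, true])]
  | .eqOrComm => corrCond f i q ψ [([false], [true]), ([true], [false])]
  | .eqAndComm => corrCond f i q ψ [([false], [true]), ([true], [false])]
  | .eqOrAssocL => corrCond f i q ψ
      [([false], [false, false]), ([true, false], [false, true]),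
       ([true, true], [true])]
  | .eqOrAssocR => corrCond f i q ψ
      [([false, false], [false]), ([false, true], [true, false]),
       ([true], [true, true])]
  | .eqAndAssocL => corrCond f i q ψ
      [([false], [false, false]), ([true, false], [false, true]),
       ([true, true], [true])]
  | .eqAndAssocR => corrCond f i q ψ
      [([false, false], [false]), ([false, true], [true, false]),
       ([true], [true, true])]
  | .eqOrUnitDel => corrCond f i q ψ [([], [false])]
  | .eqOrUnitAdd => corrCond f i q ψ [([false], [])]
  | .eqAndUnitDel => corrCond f i q ψ [([], [false])]
  | .eqAndUnitAdd => corrCond f i q ψ [([false], [])]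
  | .eqTTDel => True
  | .eqTTAdd => True
  | .eqFFDel => True
  | .eqFFAdd => True

/-- `A` is the atomic flow associated with the derivation `Φ`, where `f`
maps each atom occurrence (formula index, position) of `Φ` to an edge of
`A`, and `g` assigns to each structural inference step its vertex. -/
def IsAssocFlow (Φ : Deriv) (A : PreFlow) (f : ℕ → List Bool → ℕ)
    (g : ℕ → ℕ) : Prop :=
  Φ.WF ∧ A.IsFlow ∧
  (∀ i p, i < Φ.nf → (Φ.fml i).IsOcc p → f i p ∈ A.E) ∧
  (∀ e ∈ A.E, ∃ i p, i < Φ.nf ∧ (Φ.fml i).IsOcc p ∧ f i p = e) ∧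
  (∀ i p p', i < Φ.nf → (Φ.fml i).IsOcc p → (Φ.fml i).IsOcc p' →
    f i p = f i p' → p = p') ∧
  (∀ p, (Φ.fml 0).IsOcc p → A.up (f 0 p) = none) ∧
  (∀ p, (Φ.fml Φ.steps.length).IsOcc p → A.lo (f Φ.steps.length p) = none) ∧
  (∀ i, i < Φ.steps.length → (Φ.stepAt i).1.isStructural = true → g i ∈ A.V) ∧
  (∀ v ∈ A.V, ∃ i, i < Φ.steps.length ∧
    (Φ.stepAt i).1.isStructural = true ∧ g i = v) ∧
  (∀ i j, i < Φ.steps.length → j < Φ.steps.length →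
    (Φ.stepAt i).1.isStructural = true → (Φ.stepAt j).1.isStructural = true →
    g i = g j → i = j) ∧
  (∀ i, i < Φ.steps.length →
    stepCond A f (g i) i (Φ.stepAt i).1 (Φ.stepAt i).2.1
      (Φ.fml i) (Φ.fml (i + 1)))

/-! ### Streamlining. -/

/-- No path from an interaction or weakening vertex to a cointeraction or
coweakening vertex. -/
def NoIWPath (A : PreFlow) : Prop :=
  ¬ ∃ v v' l, v ∈ A.V ∧ v' ∈ A.V ∧
      (A.η v = .aiDown ∨ A.η v = .awDown) ∧
      (A.η v' = .aiUp ∨ A.η v' = .awUp) ∧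
      IsPath A (.ver v) (.ver v') l

/-- `Φ` is a streamlined derivation. -/
def Streamlined (Φ : Deriv) : Prop :=
  ∃ A f g, IsAssocFlow Φ A f g ∧ NoIWPath A

/-- `Φ` is a super-streamlined derivation. -/
def SuperStreamlined (Φ : Deriv) : Prop :=
  ∃ A f g, IsAssocFlow Φ A f g ∧ NoIWPath A ∧ NormalW A

/-- `Φ` is a hyper-streamlined derivation. -/
def HyperStreamlined (Φ : Deriv) : Prop :=
  ∃ A f g, IsAssocFlow Φ A f g ∧ NoIWPath A ∧ NormalW A ∧ NormalC A

end AF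

namespace AF

namespace SE15

open PreFlow

/-- default pair -/
def pdf : ℕ × Bool := (0, true)

/-- departure point of a directed edge (`true` = downward). -/
def eTail (F : PreFlow) (p : ℕ × Bool) : Option ℕ := if p.2 then F.up p.1 else F.lo p.1

/-- arrival point of a directed edge. -/
def eHead (F : PreFlow) (p : ℕ × Bool) : Option ℕ := if p.2 then F.lo p.1 else F.up p.1

lemma eTail_neg (F : PreFlow) (e : ℕ) (b : Bool) : eTail F (e, !b) = eHead F (e, b) := by
  cases b <;> simp [eTail, eHead]

def LinkOK (F : PreFlow) (p q : ℕ × Bool) : Prop :=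
  ∃ v ∈ F.V, eHead F p = some v ∧ eTail F q = some v ∧
    (p.2 = q.2 ∨ ((F.η v = .aiDown ∨ F.η v = .aiUp) ∧ p.1 ≠ q.1))

def StartOK (F : PreFlow) (ν : VPt) (p : ℕ × Bool) : Prop :=
  match ν with
  | .ver v => eTail F p = some v
  | .top => p.2 = true ∧ F.up p.1 = none
  | .bot => p.2 = false ∧ F.lo p.1 = none

def EndOK (F : PreFlow) (ν : VPt) (p : ℕ × Bool) : Prop :=
  match ν with
  | .ver v => eHead F p = some v
  | .top => p.2 = false ∧ F.up p.1 = none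
  | .bot => p.2 = true ∧ F.lo p.1 = none

/-- A directed walk in a flow. -/
def DW (F : PreFlow) (ν ν' : VPt) (w : List (ℕ × Bool)) : Prop :=
  w ≠ [] ∧ (∀ p ∈ w, p.1 ∈ F.E) ∧
  (∀ i, i + 1 < w.length → LinkOK F (w.getD i pdf) (w.getD (i + 1) pdf)) ∧
  StartOK F ν (w.getD 0 pdf) ∧ EndOK F ν' (w.getD (w.length - 1) pdf)

/-! getD helpers -/

lemma getD_map_fst (w : List (ℕ × Bool)) (i : ℕ) (h : i < w.length) :
    (w.map Prod.fst).getD i 0 = (w.getD i pdf).1 := by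
  rw [List.getD_eq_getElem _ _ (by simpa using h), List.getD_eq_getElem _ _ h,
    List.getElem_map]

lemma getD_map_pair (l : List ℕ) (b : Bool) (i : ℕ) (h : i < l.length) :
    ((l.map (fun e => (e, b))).getD i pdf) = (l.getD i 0, b) := by
  rw [List.getD_eq_getElem _ _ (by simpa using h), List.getD_eq_getElem _ _ h,
    List.getElem_map]

lemma getD_rev (l : List ℕ) (i : ℕ) (h : i < l.length) :
    l.reverse.getD i 0 = l.getD (l.length - 1 - i) 0 := by
  rw [List.getD_eq_getElem _ _ (by simpa using h), List.getD_eq_getElem _ _ (by omega),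
    List.getElem_reverse]

lemma getD_take' (w : List (ℕ × Bool)) (m i : ℕ) (h : i < m) (h2 : i < w.length) :
    (w.take m).getD i pdf = w.getD i pdf := by
  rw [List.getD_eq_getElem _ _ (by simp; omega), List.getD_eq_getElem _ _ h2,
    List.getElem_take]

lemma getD_drop' (w : List (ℕ × Bool)) (n i : ℕ) (h : n + i < w.length) :
    (w.drop n).getD i pdf = w.getD (n + i) pdf := by
  rw [List.getD_eq_getElem _ _ (by simp; omega), List.getD_eq_getElem _ _ h,
    List.getElem_drop]

lemma getD_dropLast (w : List (ℕ × Bool)) (i : ℕ) (h : i + 1 < w.length) :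
    w.dropLast.getD i pdf = w.getD i pdf := by
  rw [List.getD_eq_getElem _ _ (by simp [List.length_dropLast]; omega),
    List.getD_eq_getElem _ _ (by omega), List.getElem_dropLast]

/-! ### Down paths and walks -/

lemma down_dw {F : PreFlow} {ν ν' : VPt} {l : List ℕ} (h : IsDownPath F ν ν' l) :
    DW F ν ν' (l.map (fun e => (e, true))) := by
  obtain ⟨hne, hmem, hint, hsrc, htgt⟩ := h
  have hlen : (l.map (fun e => (e, true))).length = l.length := by simp
  have hlpos : 0 < l.length := List.length_pos_iff.2 hne
  refine ⟨by simpa using hne, ?_, ?_, ?_, ?_⟩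
  · intro p hp
    simp only [List.mem_map] at hp
    obtain ⟨e, he, rfl⟩ := hp
    exact hmem e he
  · intro i hi
    rw [hlen] at hi
    obtain ⟨v, hv, hlo, hup⟩ := hint i hi
    rw [getD_map_pair _ _ _ (by omega), getD_map_pair _ _ _ (by omega)]
    exact ⟨v, hv, by simpa [eHead] using hlo, by simpa [eTail] using hup, Or.inl rfl⟩
  · rw [getD_map_pair _ _ _ hlpos]
    cases ν with
    | ver v => simpa [StartOK, eTail, srcOK] using hsrc
    | top => simpa [StartOK, eTail, srcOK] using hsrc
    | bot => simp [srcOK] at hsrc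
  · rw [hlen, getD_map_pair _ _ _ (by omega)]
    cases ν' with
    | ver v => simpa [EndOK, eHead, tgtOK] using htgt
    | top => simp [tgtOK] at htgt
    | bot => simpa [EndOK, eHead, tgtOK] using htgt

lemma up_dw {F : PreFlow} {ν ν' : VPt} {l : List ℕ} (h : IsDownPath F ν' ν l.reverse) :
    DW F ν ν' (l.map (fun e => (e, false))) := by
  obtain ⟨hne, hmem, hint, hsrc, htgt⟩ := h
  have hlpos : 0 < l.length := by
    rcases Nat.eq_zero_or_pos l.length with h0 | h0
    · exact absurd (by simpa using List.length_eq_zero_iff.1 h0) (by simpa using hne)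
    · exact h0
  have hrlen : l.reverse.length = l.length := by simp
  refine ⟨by simpa using (by omega : l.length ≠ 0) ∘ List.length_eq_zero_iff.2, ?_, ?_, ?_, ?_⟩
  · intro p hp
    simp only [List.mem_map] at hp
    obtain ⟨e, he, rfl⟩ := hp
    exact hmem e (by simpa using he)
  · intro i hi
    simp only [List.length_map] at hi
    obtain ⟨v, hv, hlo, hup⟩ := hint (l.length - 2 - i) (by omega)
    rw [getD_rev _ _ (by omega)] at hlo
    rw [getD_rev _ _ (by omega)] at hup
    rw [getD_map_pair _ _ _ (by omega), getD_map_pair _ _ _ (by omega)]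
    have e1 : l.length - 1 - (l.length - 2 - i) = i + 1 := by omega
    have e2 : l.length - 1 - (l.length - 2 - i + 1) = i := by omega
    rw [e1] at hlo
    rw [e2] at hup
    exact ⟨v, hv, by simpa [eHead] using hup, by simpa [eTail] using hlo, Or.inl rfl⟩
  · rw [getD_map_pair _ _ _ hlpos]
    rw [hrlen] at htgt
    rw [getD_rev _ _ (by omega)] at htgt
    have : l.length - 1 - (l.length - 1) = 0 := by omega
    rw [this] at htgt
    cases ν with
    | ver v => simpa [StartOK, eTail, tgtOK] using htgt
    | bot => simpa [StartOK, eTail, tgtOK] using htgt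
    | top => simp [tgtOK] at htgt
  · rw [List.length_map, getD_map_pair _ _ _ (by omega)]
    rw [getD_rev _ _ (by omega)] at hsrc
    have : l.length - 1 - 0 = l.length - 1 := by omega
    rw [this] at hsrc
    cases ν' with
    | ver v => simpa [EndOK, eHead, srcOK] using hsrc
    | top => simpa [EndOK, eHead, srcOK] using hsrc
    | bot => simp [srcOK] at hsrc

end SE15

namespace SE15

open PreFlow

lemma eHead_neg (F : PreFlow) (e : ℕ) (b : Bool) : eHead F (e, !b) = eTail F (e, b) := by
  cases b <;> simp [eTail, eHead]

lemma ne_nil_of_len {α : Type} {w : List α} (h : 0 < w.length) : w ≠ [] := by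
  intro hc; rw [hc] at h; simp at h

lemma getD_mem' (w : List (ℕ × Bool)) (i : ℕ) (h : i < w.length) : w.getD i pdf ∈ w := by
  rw [List.getD_eq_getElem _ _ h]; exact List.getElem_mem h

lemma dw_append {F : PreFlow} {ν ν' : VPt} {u : ℕ} {w₁ w₂ : List (ℕ × Bool)}
    (h₁ : DW F ν (.ver u) w₁) (h₂ : DW F (.ver u) ν' w₂) (hu : u ∈ F.V)
    (hj : (w₁.getD (w₁.length - 1) pdf).2 = (w₂.getD 0 pdf).2 ∨
      ((F.η u = .aiDown ∨ F.η u = .aiUp) ∧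
        (w₁.getD (w₁.length - 1) pdf).1 ≠ (w₂.getD 0 pdf).1)) :
    DW F ν ν' (w₁ ++ w₂) := by
  obtain ⟨hne₁, hm₁, hl₁, hs₁, he₁⟩ := h₁
  obtain ⟨hne₂, hm₂, hl₂, hs₂, he₂⟩ := h₂
  have n₁pos : 0 < w₁.length := List.length_pos_iff.2 hne₁
  have n₂pos : 0 < w₂.length := List.length_pos_iff.2 hne₂
  refine ⟨by simp [hne₁], ?_, ?_, ?_, ?_⟩
  · intro p hp; rcases List.mem_append.1 hp with h | h
    exacts [hm₁ p h, hm₂ p h]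
  · intro i hi
    simp only [List.length_append] at hi
    rcases lt_trichotomy (i + 1) w₁.length with hlt | heq | hgt
    · rw [List.getD_append _ _ _ _ (by omega), List.getD_append _ _ _ _ hlt]
      exact hl₁ i hlt
    · rw [List.getD_append _ _ _ _ (by omega), List.getD_append_right _ _ _ _ (by omega)]
      have e1 : i + 1 - w₁.length = 0 := by omega
      have e2 : i = w₁.length - 1 := by omega
      rw [e1, e2]
      exact ⟨u, hu, he₁, hs₂, hj⟩
    · rw [List.getD_append_right _ _ _ _ (by omega), List.getD_append_right _ _ _ _ (by omega)]
      have e1 : i + 1 - w₁.length = (i - w₁.length) + 1 := by omega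
      rw [e1]
      exact hl₂ _ (by omega)
  · rw [List.getD_append _ _ _ _ n₁pos]; exact hs₁
  · rw [List.length_append, List.getD_append_right _ _ _ _ (by omega)]
    have : w₁.length + w₂.length - 1 - w₁.length = w₂.length - 1 := by omega
    rw [this]; exact he₂

lemma aipath_dw {F : PreFlow} {ν ν' : VPt} {l : List ℕ} (h : AIPath F ν ν' l) :
    ∃ w, w.map Prod.fst = l ∧ DW F ν ν' w := by
  induction h with
  | @single ν ν' l hp =>
    rcases hp with hd | hd
    · exact ⟨l.map (fun e => (e, true)), by simp [Function.comp_def], down_dw hd⟩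
    · exact ⟨l.map (fun e => (e, false)), by simp [Function.comp_def], up_dw hd⟩
  | @join ν ν' v l₁ l₂ e e' hv hai hL hR hne ih₁ ih₂ =>
    obtain ⟨w₁, hw₁, hdw₁⟩ := ih₁
    obtain ⟨w₂, hw₂, hdw₂⟩ := ih₂
    have hlen₁ : w₁.length = l₁.length + 1 := by
      have := congrArg List.length hw₁; simpa using this
    have hlen₂ : w₂.length = l₂.length + 1 := by
      have := congrArg List.length hw₂; simpa using this
    refine ⟨w₁ ++ w₂, by simp [hw₁, hw₂], ?_⟩
    refine dw_append hdw₁ hdw₂ hv (Or.inr ⟨hai, ?_⟩)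
    have h1 : (w₁.getD (w₁.length - 1) pdf).1 = e := by
      have h := getD_map_fst w₁ (w₁.length - 1) (by omega)
      rw [hw₁] at h
      rw [← h, hlen₁]
      simp
    have h2 : (w₂.getD 0 pdf).1 = e' := by
      have h := getD_map_fst w₂ 0 (by omega)
      rw [hw₂] at h
      rw [← h]
      simp
    rw [h1, h2]; exact hne

lemma dirs_const {F : PreFlow} {w : List (ℕ × Bool)}
    (hnc : ¬ ∃ k, k + 1 < w.length ∧ (w.getD k pdf).2 ≠ (w.getD (k + 1) pdf).2) :
    ∀ i, i < w.length → (w.getD i pdf).2 = (w.getD 0 pdf).2 := by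
  push_neg at hnc
  intro i
  induction i with
  | zero => intro _; rfl
  | succ k ih =>
    intro hk
    rw [← hnc k (by omega)]
    exact ih (by omega)

lemma dw_aipath {F : PreFlow} : ∀ (n : ℕ) (w : List (ℕ × Bool)) (ν ν' : VPt),
    w.length ≤ n → DW F ν ν' w → AIPath F ν ν' (w.map Prod.fst) := by
  intro n
  induction n with
  | zero =>
    intro w ν ν' hn hw
    exact absurd (List.length_eq_zero_iff.1 (by omega)) hw.1
  | succ n ih =>
    intro w ν ν' hn hw
    obtain ⟨hne, hmem, hlink, hstart, hend⟩ := hw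
    have hwpos : 0 < w.length := List.length_pos_iff.2 hne
    by_cases hex : ∃ k, k + 1 < w.length ∧ (w.getD k pdf).2 ≠ (w.getD (k + 1) pdf).2
    · obtain ⟨k, hk, hkne⟩ := hex
      obtain ⟨v, hv, hh, ht, hcond⟩ := hlink k hk
      have hai : (F.η v = .aiDown ∨ F.η v = .aiUp) ∧ (w.getD k pdf).1 ≠ (w.getD (k + 1) pdf).1 := by
        rcases hcond with h | h
        · exact absurd h hkne
        · exact h
      have hL : DW F ν (.ver v) (w.take (k + 1)) := by
        refine ⟨ne_nil_of_len (by rw [List.length_take]; omega), ?_, ?_, ?_, ?_⟩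
        · intro p hp; exact hmem p (List.take_subset _ _ hp)
        · intro i hi
          rw [List.length_take] at hi
          rw [getD_take' _ _ _ (by omega) (by omega), getD_take' _ _ _ (by omega) (by omega)]
          exact hlink i (by omega)
        · rw [getD_take' _ _ _ (by omega) (by omega)]; exact hstart
        · have hlt : (w.take (k + 1)).length - 1 = k := by rw [List.length_take]; omega
          rw [hlt, getD_take' _ _ _ (by omega) (by omega)]
          exact hh
      have hR : DW F (.ver v) ν' (w.drop (k + 1)) := by
        refine ⟨ne_nil_of_len (by rw [List.length_drop]; omega), ?_, ?_, ?_, ?_⟩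
        · intro p hp; exact hmem p (List.drop_subset _ _ hp)
        · intro i hi
          rw [List.length_drop] at hi
          rw [getD_drop' _ _ _ (by omega), getD_drop' _ _ _ (by omega)]
          have e1 : k + 1 + (i + 1) = (k + 1 + i) + 1 := by omega
          rw [e1]
          exact hlink _ (by omega)
        · rw [getD_drop' _ _ _ (by omega)]; exact ht
        · rw [List.length_drop, getD_drop' _ _ _ (by omega)]
          have e1 : k + 1 + (w.length - (k + 1) - 1) = w.length - 1 := by omega
          rw [e1]
          exact hend
      have P₁ := ih (w.take (k + 1)) ν (.ver v) (by rw [List.length_take]; omega) hL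
      have P₂ := ih (w.drop (k + 1)) (.ver v) ν' (by rw [List.length_drop]; omega) hR
      have hgk : w.getD k pdf = w[k]'(by omega) := List.getD_eq_getElem w pdf (by omega)
      have hgk1 : w.getD (k + 1) pdf = w[k + 1]'(by omega) := List.getD_eq_getElem w pdf (by omega)
      have htake : (w.take (k + 1)).map Prod.fst = (w.map Prod.fst).take k ++ [(w.getD k pdf).1] := by
        rw [List.take_succ, List.getElem?_eq_getElem (by omega : k < w.length)]
        simp only [Option.toList_some, List.map_append, List.map_cons, List.map_nil, List.map_take]
        rw [hgk]
      have hdrop : (w.drop (k + 1)).map Prod.fst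
          = (w.getD (k + 1) pdf).1 :: (w.map Prod.fst).drop (k + 2) := by
        rw [List.drop_eq_getElem_cons (by omega : k + 1 < w.length)]
        simp only [List.map_cons, List.map_drop]
        rw [hgk1]
      have hsplit : w.map Prod.fst
          = ((w.map Prod.fst).take k ++ [(w.getD k pdf).1])
            ++ (w.getD (k + 1) pdf).1 :: (w.map Prod.fst).drop (k + 2) := by
        rw [← htake, ← hdrop, ← List.map_append, List.take_append_drop]
      rw [hsplit]
      rw [htake] at P₁
      rw [hdrop] at P₂
      exact AIPath.join hv hai.1 P₁ P₂ hai.2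
    · have hall := dirs_const (F := F) hex
      cases hd0 : (w.getD 0 pdf).2 with
      | true =>
        refine AIPath.single (Or.inl ⟨by simpa using hne, ?_, ?_, ?_, ?_⟩)
        · intro e he
          simp only [List.mem_map] at he
          obtain ⟨p, hp, rfl⟩ := he
          exact hmem p hp
        · intro i hi
          rw [List.length_map] at hi
          obtain ⟨v, hv, hh, ht, _⟩ := hlink i hi
          have d1 : (w.getD i pdf).2 = true := by rw [hall i (by omega)]; exact hd0
          have d2 : (w.getD (i + 1) pdf).2 = true := by rw [hall (i + 1) (by omega)]; exact hd0
          rw [getD_map_fst _ _ (by omega), getD_map_fst _ _ (by omega)]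
          simp only [eHead, d1, if_true] at hh
          simp only [eTail, d2, if_true] at ht
          exact ⟨v, hv, hh, ht⟩
        · rw [getD_map_fst _ _ (by omega)]
          cases ν with
          | ver v => simp only [StartOK, eTail, hd0, if_true] at hstart; exact hstart
          | top => simp only [StartOK] at hstart; exact hstart.2
          | bot =>
            simp only [StartOK, hd0] at hstart
            exact absurd hstart.1 (by simp)
        · have dl : (w.getD (w.length - 1) pdf).2 = true := by
            rw [hall (w.length - 1) (by omega)]; exact hd0
          rw [List.length_map, getD_map_fst _ _ (by omega)]
          cases ν' with
          | ver v => simp only [EndOK, eHead, dl, if_true] at hend; exact hend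
          | top =>
            simp only [EndOK, dl] at hend
            exact absurd hend.1 (by simp)
          | bot => simp only [EndOK] at hend; exact hend.2
      | false =>
        refine AIPath.single (Or.inr ⟨by simpa using hne, ?_, ?_, ?_, ?_⟩)
        · intro e he
          simp only [List.mem_reverse, List.mem_map] at he
          obtain ⟨p, hp, rfl⟩ := he
          exact hmem p hp
        · intro i hi
          simp only [List.length_reverse, List.length_map] at hi
          obtain ⟨v, hv, hh, ht, _⟩ := hlink (w.length - 2 - i) (by omega)
          have d1 : (w.getD (w.length - 2 - i) pdf).2 = false := by
            rw [hall _ (by omega)]; exact hd0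
          have d2 : (w.getD (w.length - 2 - i + 1) pdf).2 = false := by
            rw [hall _ (by omega)]; exact hd0
          simp only [eHead, d1, Bool.false_eq_true, if_false] at hh
          simp only [eTail, d2, Bool.false_eq_true, if_false] at ht
          rw [getD_rev _ _ (by simp; omega), getD_rev _ _ (by simp; omega)]
          simp only [List.length_map]
          have e1 : w.length - 1 - i = w.length - 2 - i + 1 := by omega
          have e2 : w.length - 1 - (i + 1) = w.length - 2 - i := by omega
          rw [e1, e2, getD_map_fst _ _ (by omega), getD_map_fst _ _ (by omega)]
          exact ⟨v, hv, ht, hh⟩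
        · rw [getD_rev _ _ (by simp; omega)]
          simp only [List.length_map]
          have dl : (w.getD (w.length - 1) pdf).2 = false := by
            rw [hall _ (by omega)]; exact hd0
          have e1 : w.length - 1 - 0 = w.length - 1 := by omega
          rw [e1, getD_map_fst _ _ (by omega)]
          cases ν' with
          | ver v => simp only [EndOK, eHead, dl, Bool.false_eq_true, if_false] at hend; exact hend
          | top => simp only [EndOK] at hend; exact hend.2
          | bot =>
            simp only [EndOK, dl] at hend
            exact absurd hend.1 (by simp)
        · have hrl : ((w.map Prod.fst).reverse).length = w.length := by simp
          rw [hrl, getD_rev _ _ (by simp; omega)]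
          simp only [List.length_map]
          have e1 : w.length - 1 - (w.length - 1) = 0 := by omega
          rw [e1, getD_map_fst _ _ (by omega)]
          cases ν with
          | ver v => simp only [StartOK, eTail, hd0, Bool.false_eq_true, if_false] at hstart; exact hstart
          | top =>
            simp only [StartOK, hd0] at hstart
            exact absurd hstart.1 (by simp)
          | bot => simp only [StartOK] at hstart; exact hstart.2

end SE15

namespace SE15

open PreFlow

lemma dw_shift {F : PreFlow} {ν ν' : VPt} {p : ℕ × Bool} {w : List (ℕ × Bool)}
    (h : DW F ν ν' (p :: w)) (hw : w ≠ []) {z : ℕ}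
    (ht : eTail F (w.getD 0 pdf) = some z) : DW F (.ver z) ν' w := by
  obtain ⟨_, hmem, hlink, _, hend⟩ := h
  have hwpos : 0 < w.length := List.length_pos_iff.2 hw
  refine ⟨hw, fun q hq => hmem q (List.mem_cons_of_mem _ hq), ?_, ht, ?_⟩
  · intro i hi
    have := hlink (i + 1) (by simp; omega)
    simpa only [List.getD_cons_succ] using this
  · have e1 : (p :: w).length - 1 = (w.length - 1) + 1 := by simp; omega
    rw [e1, List.getD_cons_succ] at hend
    exact hend

lemma dw_cycle {F : PreFlow} : ∀ (n : ℕ) (w : List (ℕ × Bool)) (u : ℕ), w.length ≤ n →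
    u ∈ F.V → DW F (.ver u) (.ver u) w → HasAICycle F := by
  intro n
  induction n with
  | zero =>
    intro w u hn hu hw
    exact absurd (List.length_eq_zero_iff.1 (by omega)) hw.1
  | succ n ih =>
    intro w u hn hu hw
    by_cases hnd : (w.map Prod.fst).Nodup
    · exact ⟨u, w.map Prod.fst, hu, dw_aipath w.length w _ _ le_rfl hw, hnd⟩
    · obtain ⟨hne, hmem, hlink, hstart, hend⟩ := hw
      have hwpos : 0 < w.length := List.length_pos_iff.2 hne
      have hdup : ∃ i j, i < j ∧ j < w.length ∧ (w.getD i pdf).1 = (w.getD j pdf).1 := by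
        rw [List.nodup_iff_injective_get] at hnd
        simp only [Function.Injective, not_forall] at hnd
        obtain ⟨a, b, hab, hne'⟩ := hnd
        have ha : (a : ℕ) < w.length := by have := a.2; simpa using this
        have hb : (b : ℕ) < w.length := by have := b.2; simpa using this
        have hab' : (w.getD (a : ℕ) pdf).1 = (w.getD (b : ℕ) pdf).1 := by
          have := hab
          rw [List.get_eq_getElem, List.get_eq_getElem] at this
          rw [List.getD_eq_getElem _ _ ha, List.getD_eq_getElem _ _ hb]
          simpa using this
        rcases lt_or_gt_of_ne (fun hc : (a : ℕ) = (b : ℕ) => hne' (Fin.ext hc)) with h | h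
        · exact ⟨a, b, h, hb, hab'⟩
        · exact ⟨b, a, h, ha, hab'.symm⟩
      obtain ⟨i, j, hij, hjlen, hedge⟩ := hdup
      by_cases hd : (w.getD i pdf).2 = (w.getD j pdf).2
      · -- same direction: shortcut
        have hpq : w.getD i pdf = w.getD j pdf := by
          have h1 := hedge; have h2 := hd
          cases hgi : w.getD i pdf; cases hgj : w.getD j pdf
          rw [hgi, hgj] at h1 h2
          simp_all
        refine ih (w.take (i + 1) ++ w.drop (j + 1)) u ?_ hu ?_
        · simp only [List.length_append, List.length_take, List.length_drop]
          omega
        refine ⟨ne_nil_of_len (by simp [List.length_take]; omega), ?_, ?_, ?_, ?_⟩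
        · intro q hq
          rcases List.mem_append.1 hq with h | h
          exacts [hmem q (List.take_subset _ _ h), hmem q (List.drop_subset _ _ h)]
        · intro i' hi'
          simp only [List.length_append, List.length_take, List.length_drop] at hi'
          have htl : (w.take (i + 1)).length = i + 1 := by simp [List.length_take]; omega
          rcases lt_trichotomy (i' + 1) (i + 1) with hlt | heq | hgt
          · rw [List.getD_append _ _ _ _ (by omega), List.getD_append _ _ _ _ (by omega)]
            rw [getD_take' _ _ _ (by omega) (by omega), getD_take' _ _ _ (by omega) (by omega)]
            exact hlink i' (by omega)
          · have hi'i : i' = i := by omega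
            subst hi'i
            have hjlt : j + 1 < w.length := by omega
            rw [List.getD_append _ _ _ _ (by omega), List.getD_append_right _ _ _ _ (by omega)]
            rw [getD_take' _ _ _ (by omega) (by omega)]
            have e1 : i' + 1 - (w.take (i' + 1)).length = 0 := by omega
            rw [e1, getD_drop' _ _ _ (by omega)]
            have e2 : j + 1 + 0 = j + 1 := by omega
            rw [e2, hpq]
            exact hlink j (by omega)
          · rw [List.getD_append_right _ _ _ _ (by omega), List.getD_append_right _ _ _ _ (by omega)]
            rw [htl]
            have e1 : i' - (i + 1) + 1 = i' + 1 - (i + 1) := by omega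
            rw [← e1, getD_drop' _ _ _ (by omega), getD_drop' _ _ _ (by omega)]
            have e2 : j + 1 + (i' - (i + 1) + 1) = (j + 1 + (i' - (i + 1))) + 1 := by omega
            rw [e2]
            exact hlink _ (by omega)
        · rw [List.getD_append _ _ _ _ (by simp [List.length_take]; omega)]
          rw [getD_take' _ _ _ (by omega) (by omega)]
          exact hstart
        · by_cases hjl : j + 1 = w.length
          · have hdr : w.drop (j + 1) = [] := by
              apply List.drop_eq_nil_of_le; omega
            rw [hdr, List.append_nil]
            have htl : (w.take (i + 1)).length = i + 1 := by simp [List.length_take]; omega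
            rw [htl]
            have e1 : i + 1 - 1 = i := by omega
            rw [e1, getD_take' _ _ _ (by omega) (by omega)]
            show eHead F (w.getD i pdf) = some u
            rw [hpq]
            have e2 : j = w.length - 1 := by omega
            rw [e2]
            exact hend
          · have hlen' : (w.take (i + 1) ++ w.drop (j + 1)).length
                = i + 1 + (w.length - (j + 1)) := by simp [List.length_take]; omega
            rw [hlen', List.getD_append_right _ _ _ _ (by simp [List.length_take]; omega)]
            have htl : (w.take (i + 1)).length = i + 1 := by simp [List.length_take]; omega
            rw [htl]
            have e1 : i + 1 + (w.length - (j + 1)) - 1 - (i + 1) = w.length - (j + 1) - 1 := by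
              omega
            rw [e1, getD_drop' _ _ _ (by omega)]
            have e2 : j + 1 + (w.length - (j + 1) - 1) = w.length - 1 := by omega
            rw [e2]
            exact hend
      · -- opposite directions
        have hd' : w.getD j pdf = ((w.getD i pdf).1, !(w.getD i pdf).2) := by
          rw [Prod.ext_iff]
          constructor
          · simpa using hedge.symm
          · show (w.getD j pdf).2 = !(w.getD i pdf).2
            cases hb : (w.getD i pdf).2 <;> cases hc : (w.getD j pdf).2 <;> simp_all
        by_cases hext : i = 0 ∧ j = w.length - 1
        · obtain ⟨hi0, hjl⟩ := hext
          subst hi0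
          have hlen3 : 3 ≤ w.length := by
            by_contra hc
            have h2 : w.length = 2 := by omega
            obtain ⟨v, _, _, _, hcond⟩ := hlink 0 (by omega)
            have hj1 : j = 1 := by omega
            rcases hcond with hcd | hcd
            · rw [hj1] at hd; exact hd hcd
            · rw [hj1] at hedge; exact hcd.2 hedge
          obtain ⟨v, hv, hh0, ht1, _⟩ := hlink 0 (by omega)
          refine ih ((w.drop 1).dropLast) v ?_ hv ?_
          · simp [List.length_dropLast, List.length_drop]; omega
          have hgt : ∀ m, m + 2 < w.length →
              ((w.drop 1).dropLast).getD m pdf = w.getD (m + 1) pdf := by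
            intro m hm
            rw [getD_dropLast (w.drop 1) m (by simp [List.length_drop]; omega),
              getD_drop' w 1 m (by omega)]
            congr 1
            omega
          have hlen' : ((w.drop 1).dropLast).length = w.length - 2 := by
            simp [List.length_dropLast, List.length_drop]
            omega
          refine ⟨ne_nil_of_len (by rw [hlen']; omega), ?_, ?_, ?_, ?_⟩
          · intro q hq
            exact hmem q (List.drop_subset _ _ (List.dropLast_subset _ hq))
          · intro i' hi'
            rw [hlen'] at hi'
            rw [hgt i' (by omega), hgt (i' + 1) (by omega)]
            exact hlink (i' + 1) (by omega)
          · rw [hgt 0 (by omega)]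
            exact ht1
          · rw [hlen', hgt (w.length - 2 - 1) (by omega)]
            have e1 : w.length - 2 - 1 + 1 = w.length - 2 := by omega
            rw [e1]
            obtain ⟨z, _, hhz, htz, _⟩ := hlink (w.length - 2) (by omega)
            have e2 : w.length - 2 + 1 = w.length - 1 := by omega
            rw [e2] at htz
            have e3 : w.getD (w.length - 1) pdf = ((w.getD 0 pdf).1, !(w.getD 0 pdf).2) := by
              rw [← hjl]; exact hd'
            rw [e3, eTail_neg, hh0] at htz
            obtain rfl : z = v := by
              have := htz.symm
              simpa using this
            exact hhz
        · -- middle loop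
          have hcase : 1 ≤ i ∨ j + 1 < w.length := by
            by_contra hc
            push_neg at hc
            exact hext ⟨by omega, by omega⟩
          have hu₂ : ∃ u₂, u₂ ∈ F.V ∧ eTail F (w.getD i pdf) = some u₂ := by
            rcases Nat.eq_zero_or_pos i with hi0 | hipos
            · subst hi0; exact ⟨u, hu, hstart⟩
            · obtain ⟨v, hv, _, ht, _⟩ := hlink (i - 1) (by omega)
              have e1 : i - 1 + 1 = i := by omega
              rw [e1] at ht
              exact ⟨v, hv, ht⟩
          obtain ⟨u₂, hu₂V, htu₂⟩ := hu₂
          refine ih ((w.drop i).take (j - i + 1)) u₂ ?_ hu₂V ?_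
          · simp only [List.length_take, List.length_drop]
            omega
          have hgt : ∀ m, m ≤ j - i →
              ((w.drop i).take (j - i + 1)).getD m pdf = w.getD (i + m) pdf := by
            intro m hm
            rw [getD_take' _ _ _ (by omega) (by simp [List.length_drop]; omega),
              getD_drop' _ _ _ (by omega)]
          have hlen' : ((w.drop i).take (j - i + 1)).length = j - i + 1 := by
            simp [List.length_take, List.length_drop]; omega
          refine ⟨ne_nil_of_len (by rw [hlen']; omega), ?_, ?_, ?_, ?_⟩
          · intro q hq
            exact hmem q (List.drop_subset _ _ (List.take_subset _ _ hq))
          · intro i' hi'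
            rw [hlen'] at hi'
            rw [hgt i' (by omega), hgt (i' + 1) (by omega)]
            have e1 : i + (i' + 1) = (i + i') + 1 := by omega
            rw [e1]
            exact hlink _ (by omega)
          · rw [hgt 0 (by omega)]
            have e1 : i + 0 = i := by omega
            rw [e1]
            exact htu₂
          · rw [hlen']
            have e1 : j - i + 1 - 1 = j - i := by omega
            rw [e1, hgt (j - i) (by omega)]
            have e2 : i + (j - i) = j := by omega
            rw [e2]
            show eHead F (w.getD j pdf) = some u₂
            rw [hd', eHead_neg]
            exact htu₂

end SE15

namespace SE15

open PreFlow

lemma trim_top {F : PreFlow} {w : List (ℕ × Bool)} (h : DW F .top .top w)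
    (he : (w.getD 0 pdf).1 = (w.getD (w.length - 1) pdf).1) :
    ∃ u w', u ∈ F.V ∧ DW F (.ver u) (.ver u) w' := by
  obtain ⟨hne, hmem, hlink, hstart, hend⟩ := h
  have hwpos : 0 < w.length := List.length_pos_iff.2 hne
  have hs1 : (w.getD 0 pdf).2 = true := hstart.1
  have hs2 : F.up (w.getD 0 pdf).1 = none := hstart.2
  have he1 : (w.getD (w.length - 1) pdf).2 = false := hend.1
  have hlen3 : 3 ≤ w.length := by
    by_contra hc
    rcases (by omega : w.length = 1 ∨ w.length = 2) with h1 | h1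
    · have e0 : w.length - 1 = 0 := by omega
      rw [e0, hs1] at he1
      exact absurd he1 (by simp)
    · obtain ⟨v, _, _, _, hcond⟩ := hlink 0 (by omega)
      rw [h1] at he1 he
      rcases hcond with hcd | hcd
      · rw [hs1] at hcd; rw [← hcd] at he1; simp at he1
      · exact hcd.2 he
  obtain ⟨v, hv, hh0, ht1, _⟩ := hlink 0 (by omega)
  refine ⟨v, (w.drop 1).dropLast, hv, ?_⟩
  have hgt : ∀ m, m + 2 < w.length →
      ((w.drop 1).dropLast).getD m pdf = w.getD (m + 1) pdf := by
    intro m hm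
    rw [getD_dropLast (w.drop 1) m (by simp [List.length_drop]; omega),
      getD_drop' w 1 m (by omega)]
    congr 1
    omega
  have hlen' : ((w.drop 1).dropLast).length = w.length - 2 := by
    simp [List.length_dropLast, List.length_drop]
    omega
  refine ⟨ne_nil_of_len (by rw [hlen']; omega), ?_, ?_, ?_, ?_⟩
  · intro q hq
    exact hmem q (List.drop_subset _ _ (List.dropLast_subset _ hq))
  · intro i' hi'
    rw [hlen'] at hi'
    rw [hgt i' (by omega), hgt (i' + 1) (by omega)]
    exact hlink (i' + 1) (by omega)
  · rw [hgt 0 (by omega)]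
    exact ht1
  · rw [hlen', hgt (w.length - 2 - 1) (by omega)]
    have e1 : w.length - 2 - 1 + 1 = w.length - 2 := by omega
    rw [e1]
    obtain ⟨z, _, hhz, htz, _⟩ := hlink (w.length - 2) (by omega)
    have e2 : w.length - 2 + 1 = w.length - 1 := by omega
    rw [e2] at htz
    have e3 : eTail F (w.getD (w.length - 1) pdf) = F.lo (w.getD 0 pdf).1 := by
      simp only [eTail, he1, Bool.false_eq_true, if_false, he]
    have e4 : eHead F (w.getD 0 pdf) = F.lo (w.getD 0 pdf).1 := by
      simp only [eHead, hs1, if_true]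
    rw [e3, ← e4, hh0] at htz
    obtain rfl : z = v := by simpa using htz.symm
    exact hhz

lemma trim_bot {F : PreFlow} {w : List (ℕ × Bool)} (h : DW F .bot .bot w)
    (he : (w.getD 0 pdf).1 = (w.getD (w.length - 1) pdf).1) :
    ∃ u w', u ∈ F.V ∧ DW F (.ver u) (.ver u) w' := by
  obtain ⟨hne, hmem, hlink, hstart, hend⟩ := h
  have hwpos : 0 < w.length := List.length_pos_iff.2 hne
  have hs1 : (w.getD 0 pdf).2 = false := hstart.1
  have he1 : (w.getD (w.length - 1) pdf).2 = true := hend.1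
  have hlen3 : 3 ≤ w.length := by
    by_contra hc
    rcases (by omega : w.length = 1 ∨ w.length = 2) with h1 | h1
    · have e0 : w.length - 1 = 0 := by omega
      rw [e0, hs1] at he1
      exact absurd he1 (by simp)
    · obtain ⟨v, _, _, _, hcond⟩ := hlink 0 (by omega)
      rw [h1] at he1 he
      rcases hcond with hcd | hcd
      · rw [hs1] at hcd; rw [← hcd] at he1; simp at he1
      · exact hcd.2 he
  obtain ⟨v, hv, hh0, ht1, _⟩ := hlink 0 (by omega)
  refine ⟨v, (w.drop 1).dropLast, hv, ?_⟩
  have hgt : ∀ m, m + 2 < w.length →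
      ((w.drop 1).dropLast).getD m pdf = w.getD (m + 1) pdf := by
    intro m hm
    rw [getD_dropLast (w.drop 1) m (by simp [List.length_drop]; omega),
      getD_drop' w 1 m (by omega)]
    congr 1
    omega
  have hlen' : ((w.drop 1).dropLast).length = w.length - 2 := by
    simp [List.length_dropLast, List.length_drop]
    omega
  refine ⟨ne_nil_of_len (by rw [hlen']; omega), ?_, ?_, ?_, ?_⟩
  · intro q hq
    exact hmem q (List.drop_subset _ _ (List.dropLast_subset _ hq))
  · intro i' hi'
    rw [hlen'] at hi'
    rw [hgt i' (by omega), hgt (i' + 1) (by omega)]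
    exact hlink (i' + 1) (by omega)
  · rw [hgt 0 (by omega)]
    exact ht1
  · rw [hlen', hgt (w.length - 2 - 1) (by omega)]
    have e1 : w.length - 2 - 1 + 1 = w.length - 2 := by omega
    rw [e1]
    obtain ⟨z, _, hhz, htz, _⟩ := hlink (w.length - 2) (by omega)
    have e2 : w.length - 2 + 1 = w.length - 1 := by omega
    rw [e2] at htz
    have e3 : eTail F (w.getD (w.length - 1) pdf) = F.up (w.getD 0 pdf).1 := by
      simp only [eTail, he1, if_true, he]
    have e4 : eHead F (w.getD 0 pdf) = F.up (w.getD 0 pdf).1 := by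
      simp only [eHead, hs1, Bool.false_eq_true, if_false]
    rw [e3, ← e4, hh0] at htz
    obtain rfl : z = v := by simpa using htz.symm
    exact hhz

lemma getD_map_f (w : List (ℕ × Bool)) (f : ℕ × Bool → ℕ × Bool) (i : ℕ) (h : i < w.length) :
    (w.map f).getD i pdf = f (w.getD i pdf) := by
  rw [List.getD_eq_getElem _ _ (by simpa using h), List.getD_eq_getElem _ _ h,
    List.getElem_map]

lemma iso_dw {C D : PreFlow} (I : FlowIso C D) {v : ℕ} {w : List (ℕ × Bool)}
    (h : DW C (.ver v) (.ver v) w) :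
    DW D (.ver (I.vmap v)) (.ver (I.vmap v)) (w.map (fun p => (I.emap p.1, p.2))) := by
  obtain ⟨hne, hmem, hlink, hstart, hend⟩ := h
  have hwpos : 0 < w.length := List.length_pos_iff.2 hne
  have hE : ∀ i, i < w.length → (w.getD i pdf).1 ∈ C.E := fun i hi =>
    hmem _ (getD_mem' w i hi)
  have hHead : ∀ i, i < w.length → ∀ z, eHead C (w.getD i pdf) = some z →
      eHead D ((I.emap (w.getD i pdf).1, (w.getD i pdf).2)) = some (I.vmap z) := by
    intro i hi z hz
    cases hb : (w.getD i pdf).2 <;>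
      simp only [eHead, hb, Bool.false_eq_true, if_false, if_true] at hz ⊢
    · rw [I.upc _ (hE i hi), hz]; rfl
    · rw [I.loc _ (hE i hi), hz]; rfl
  have hTail : ∀ i, i < w.length → ∀ z, eTail C (w.getD i pdf) = some z →
      eTail D ((I.emap (w.getD i pdf).1, (w.getD i pdf).2)) = some (I.vmap z) := by
    intro i hi z hz
    cases hb : (w.getD i pdf).2 <;>
      simp only [eTail, hb, Bool.false_eq_true, if_false, if_true] at hz ⊢
    · rw [I.loc _ (hE i hi), hz]; rfl
    · rw [I.upc _ (hE i hi), hz]; rfl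
  refine ⟨by simpa using hne, ?_, ?_, ?_, ?_⟩
  · intro p hp
    simp only [List.mem_map] at hp
    obtain ⟨q, hq, rfl⟩ := hp
    have := I.ebij.mapsTo (show q.1 ∈ (C.E : Set ℕ) by exact_mod_cast hmem q hq)
    exact_mod_cast this
  · intro i hi
    rw [List.length_map] at hi
    rw [getD_map_f _ _ _ (by omega), getD_map_f _ _ _ (by omega)]
    obtain ⟨z, hz, hh, ht, hcond⟩ := hlink i hi
    refine ⟨I.vmap z, ?_, hHead i (by omega) z hh, hTail (i + 1) (by omega) z ht, ?_⟩
    · have := I.vbij.mapsTo (show z ∈ (C.V : Set ℕ) by exact_mod_cast hz)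
      exact_mod_cast this
    · rcases hcond with hcd | hcd
      · exact Or.inl hcd
      · refine Or.inr ⟨by rw [I.lab z hz]; exact hcd.1, ?_⟩
        intro hc
        exact hcd.2 (I.ebij.injOn (show _ ∈ (C.E : Set ℕ) by exact_mod_cast hE i (by omega))
          (show _ ∈ (C.E : Set ℕ) by exact_mod_cast hE (i + 1) (by omega)) hc)
  · rw [getD_map_f _ _ _ (by omega)]
    exact hTail 0 (by omega) v hstart
  · rw [List.length_map, getD_map_f _ _ _ (by omega)]
    exact hHead (w.length - 1) (by omega) v hend

lemma iso_nodup {C D : PreFlow} (I : FlowIso C D) {w : List (ℕ × Bool)}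
    (hm : ∀ p ∈ w, p.1 ∈ C.E) (hnd : (w.map Prod.fst).Nodup) :
    ((w.map (fun p => (I.emap p.1, p.2))).map Prod.fst).Nodup := by
  have he : (w.map (fun p => (I.emap p.1, p.2))).map Prod.fst
      = (w.map Prod.fst).map I.emap := by
    simp [List.map_map, Function.comp_def]
  rw [he]
  refine hnd.map_on ?_
  intro x hx y hy hxy
  simp only [List.mem_map] at hx hy
  obtain ⟨p, hp, rfl⟩ := hx
  obtain ⟨q, hq, rfl⟩ := hy
  exact I.ebij.injOn (show _ ∈ (C.E : Set ℕ) by exact_mod_cast hm p hp)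
    (show _ ∈ (C.E : Set ℕ) by exact_mod_cast hm q hq) hxy

end SE15

namespace SE15

open PreFlow

section SEF

variable {B : PreFlow} {vi vc e0 e2 e3 : ℕ}

lemma eta0 (y : ℕ) : (seFlow B vi vc e0 e2 e3).η (Nat.pair 0 y) = B.η y := by
  simp [seFlow, Nat.unpair_pair]

lemma eta1 (y : ℕ) : (seFlow B vi vc e0 e2 e3).η (Nat.pair 1 y) = B.η y := by
  simp [seFlow, Nat.unpair_pair]

lemma eta20 : (seFlow B vi vc e0 e2 e3).η (Nat.pair 2 0) = .awDown := by
  simp [seFlow, Nat.unpair_pair]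

lemma eta21 : (seFlow B vi vc e0 e2 e3).η (Nat.pair 2 1) = .awUp := by
  simp [seFlow, Nat.unpair_pair]

lemma eta3 (y : ℕ) : (seFlow B vi vc e0 e2 e3).η (Nat.pair 3 y) = .acUp := by
  simp [seFlow, Nat.unpair_pair]

lemma eta4 (y : ℕ) : (seFlow B vi vc e0 e2 e3).η (Nat.pair 4 y) = .acDown := by
  simp [seFlow, Nat.unpair_pair]

lemma up0 (y u : ℕ) (hy : y ≠ e2) (h : B.up y = some u) :
    (seFlow B vi vc e0 e2 e3).up (Nat.pair 0 y) = some (Nat.pair 0 u) := by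
  simp [seFlow, Nat.unpair_pair, hy, h]

lemma up0n (y : ℕ) (hy : y ≠ e2) (h : B.up y = none) :
    (seFlow B vi vc e0 e2 e3).up (Nat.pair 0 y) = some (Nat.pair 3 y) := by
  simp [seFlow, Nat.unpair_pair, hy, h]

lemma up0c (u : ℕ) (h : B.up e3 = some u) :
    (seFlow B vi vc e0 e2 e3).up (Nat.pair 0 e2) = some (Nat.pair 1 u) := by
  simp [seFlow, Nat.unpair_pair, h]

lemma up0cn (h : B.up e3 = none) :
    (seFlow B vi vc e0 e2 e3).up (Nat.pair 0 e2) = some (Nat.pair 3 e3) := by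
  simp [seFlow, Nat.unpair_pair, h]

lemma up1 (y u : ℕ) (hy : y ≠ e2) (h : B.up y = some u) :
    (seFlow B vi vc e0 e2 e3).up (Nat.pair 1 y) = some (Nat.pair 1 u) := by
  simp [seFlow, Nat.unpair_pair, hy, h]

lemma up1n (y : ℕ) (hy : y ≠ e2) (h : B.up y = none) :
    (seFlow B vi vc e0 e2 e3).up (Nat.pair 1 y) = some (Nat.pair 3 y) := by
  simp [seFlow, Nat.unpair_pair, hy, h]

lemma up12 : (seFlow B vi vc e0 e2 e3).up (Nat.pair 1 e2) = some (Nat.pair 2 0) := by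
  simp [seFlow, Nat.unpair_pair]

lemma up3 (y : ℕ) : (seFlow B vi vc e0 e2 e3).up (Nat.pair 3 y) = none := by
  simp [seFlow, Nat.unpair_pair]

lemma up4 (y : ℕ) : (seFlow B vi vc e0 e2 e3).up (Nat.pair 4 y) = some (Nat.pair 4 y) := by
  simp [seFlow, Nat.unpair_pair]

lemma lo0 (y u : ℕ) (hy : y ≠ e2) (hy3 : y ≠ e3) (h : B.lo y = some u) :
    (seFlow B vi vc e0 e2 e3).lo (Nat.pair 0 y) = some (Nat.pair 0 u) := by
  simp [seFlow, Nat.unpair_pair, hy, hy3, h]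

lemma lo0n (y : ℕ) (hy : y ≠ e2) (hy3 : y ≠ e3) (h : B.lo y = none) :
    (seFlow B vi vc e0 e2 e3).lo (Nat.pair 0 y) = some (Nat.pair 4 y) := by
  simp [seFlow, Nat.unpair_pair, hy, hy3, h]

lemma lo0c (u : ℕ) (h : B.lo e2 = some u) :
    (seFlow B vi vc e0 e2 e3).lo (Nat.pair 0 e2) = some (Nat.pair 0 u) := by
  simp [seFlow, Nat.unpair_pair, h]

lemma lo0cn (h : B.lo e2 = none) :
    (seFlow B vi vc e0 e2 e3).lo (Nat.pair 0 e2) = some (Nat.pair 4 e2) := by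
  simp [seFlow, Nat.unpair_pair, h]

lemma lo03 (h32 : e3 ≠ e2) :
    (seFlow B vi vc e0 e2 e3).lo (Nat.pair 0 e3) = some (Nat.pair 2 1) := by
  simp [seFlow, Nat.unpair_pair, h32]

lemma lo1 (y u : ℕ) (h : B.lo y = some u) :
    (seFlow B vi vc e0 e2 e3).lo (Nat.pair 1 y) = some (Nat.pair 1 u) := by
  simp [seFlow, Nat.unpair_pair, h]

lemma lo1n (y : ℕ) (h : B.lo y = none) :
    (seFlow B vi vc e0 e2 e3).lo (Nat.pair 1 y) = some (Nat.pair 4 y) := by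
  simp [seFlow, Nat.unpair_pair, h]

lemma lo3 (y : ℕ) : (seFlow B vi vc e0 e2 e3).lo (Nat.pair 3 y) = some (Nat.pair 3 y) := by
  simp [seFlow, Nat.unpair_pair]

lemma lo4 (y : ℕ) : (seFlow B vi vc e0 e2 e3).lo (Nat.pair 4 y) = none := by
  simp [seFlow, Nat.unpair_pair]

lemma memV (x : ℕ) (hx : x ∈ (seFlow B vi vc e0 e2 e3).V) :
    (∃ w, w ∈ (B.V.erase vi).erase vc ∧ (x = Nat.pair 0 w ∨ x = Nat.pair 1 w)) ∨
    x = Nat.pair 2 0 ∨ x = Nat.pair 2 1 ∨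
    (∃ y, y ∈ B.E ∧ B.up y = none ∧ x = Nat.pair 3 y) ∨
    (∃ y, y ∈ B.E ∧ B.lo y = none ∧ x = Nat.pair 4 y) := by
  simp only [seFlow, Finset.mem_union, Finset.mem_image, Finset.mem_insert,
    Finset.mem_singleton, Finset.mem_filter] at hx
  rcases hx with ((((⟨w, hw, rfl⟩ | ⟨w, hw, rfl⟩) | (h | h)) | ⟨y, hy, rfl⟩) | ⟨y, hy, rfl⟩)
  · exact Or.inl ⟨w, hw, Or.inl rfl⟩
  · exact Or.inl ⟨w, hw, Or.inr rfl⟩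
  · exact Or.inr (Or.inl h)
  · exact Or.inr (Or.inr (Or.inl h))
  · exact Or.inr (Or.inr (Or.inr (Or.inl ⟨y, hy.1, hy.2, rfl⟩)))
  · exact Or.inr (Or.inr (Or.inr (Or.inr ⟨y, hy.1, hy.2, rfl⟩)))

lemma memV01 (t w : ℕ) (ht : t = 0 ∨ t = 1)
    (hx : Nat.pair t w ∈ (seFlow B vi vc e0 e2 e3).V) : w ∈ B.V := by
  rcases memV _ hx with ⟨w', hw', h | h⟩ | h | h | ⟨y, _, _, h⟩ | ⟨y, _, _, h⟩ <;>
    rcases ht with rfl | rfl <;>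
    first
      | (rw [Nat.pair_eq_pair] at h
         first
           | exact absurd h.1 (by omega)
           | (obtain ⟨h1, rfl⟩ := h
              exact Finset.mem_of_mem_erase (Finset.mem_of_mem_erase hw')))
      | skip
  all_goals
    rcases h with h | h <;> rw [Nat.pair_eq_pair] at h <;> exact absurd h.1 (by omega)

lemma memE (he2 : e2 ∈ B.E) (h02 : e0 ≠ e2) (x : ℕ)
    (hx : x ∈ (seFlow B vi vc e0 e2 e3).E) :
    (∃ y, y ∈ B.E ∧ y ≠ e0 ∧ x = Nat.pair 0 y) ∨
    (∃ y, y ∈ B.E ∧ y ≠ e0 ∧ y ≠ e3 ∧ x = Nat.pair 1 y) ∨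
    (∃ y, y ∈ B.E ∧ B.up y = none ∧ x = Nat.pair 3 y) ∨
    (∃ y, y ∈ B.E ∧ B.lo y = none ∧ x = Nat.pair 4 y) := by
  simp only [seFlow, Finset.mem_union, Finset.mem_image, Finset.mem_erase,
    Finset.mem_filter] at hx
  rcases hx with ((⟨y, hy, rfl⟩ | ⟨y, hy, rfl⟩) | ⟨y, hy, rfl⟩) | ⟨y, hy, rfl⟩
  · exact Or.inl ⟨y, hy.2, hy.1, rfl⟩
  · by_cases hy3 : y = e3
    · subst hy3
      rw [if_pos rfl]
      exact Or.inl ⟨e2, he2, fun hc => h02 hc.symm, rfl⟩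
    · rw [if_neg hy3]
      exact Or.inr (Or.inl ⟨y, hy.2, hy.1, hy3, rfl⟩)
  · exact Or.inr (Or.inr (Or.inl ⟨y, hy.1, hy.2, rfl⟩))
  · exact Or.inr (Or.inr (Or.inr ⟨y, hy.1, hy.2, rfl⟩))

end SEF

end SE15

namespace SE15

open PreFlow

section SEFB

variable {B : PreFlow} {vi vc e0 e2 e3 : ℕ}

lemma up_eq2 (he2 : e2 ∈ B.E) (h02 : e0 ≠ e2) (a z : ℕ) (ha : a ∈ (seFlow B vi vc e0 e2 e3).E)
    (h : (seFlow B vi vc e0 e2 e3).up a = some (Nat.pair 2 z)) :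
    a = Nat.pair 1 e2 ∧ z = 0 := by
  rcases memE he2 h02 a ha with ⟨y, hy, hy0, rfl⟩ | ⟨y, hy, hy0, hy3, rfl⟩ |
    ⟨y, hy, hyu, rfl⟩ | ⟨y, hy, hyl, rfl⟩
  · by_cases hc : y = e2
    · subst hc
      rcases hU : B.up e3 with _ | u
      · rw [up0cn hU] at h; simp [Nat.pair_eq_pair] at h
      · rw [up0c u hU] at h; simp [Nat.pair_eq_pair] at h
    · rcases hU : B.up y with _ | u
      · rw [up0n y hc hU] at h; simp [Nat.pair_eq_pair] at h
      · rw [up0 y u hc hU] at h; simp [Nat.pair_eq_pair] at h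
  · by_cases hc : y = e2
    · subst hc
      rw [up12] at h
      simp only [Option.some.injEq, Nat.pair_eq_pair] at h
      exact ⟨rfl, h.2.symm⟩
    · rcases hU : B.up y with _ | u
      · rw [up1n y hc hU] at h; simp [Nat.pair_eq_pair] at h
      · rw [up1 y u hc hU] at h; simp [Nat.pair_eq_pair] at h
  · rw [up3] at h; simp at h
  · rw [up4] at h; simp [Nat.pair_eq_pair] at h

lemma lo_eq2 (he2 : e2 ∈ B.E) (h02 : e0 ≠ e2) (h32 : e3 ≠ e2) (a z : ℕ) (ha : a ∈ (seFlow B vi vc e0 e2 e3).E)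
    (h : (seFlow B vi vc e0 e2 e3).lo a = some (Nat.pair 2 z)) :
    a = Nat.pair 0 e3 ∧ z = 1 := by
  rcases memE he2 h02 a ha with ⟨y, hy, hy0, rfl⟩ | ⟨y, hy, hy0, hy3, rfl⟩ |
    ⟨y, hy, hyu, rfl⟩ | ⟨y, hy, hyl, rfl⟩
  · by_cases hc : y = e2
    · subst hc
      rcases hL : B.lo y with _ | u
      · rw [lo0cn hL] at h; simp [Nat.pair_eq_pair] at h
      · rw [lo0c u hL] at h; simp [Nat.pair_eq_pair] at h
    · by_cases hc3 : y = e3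
      · subst hc3
        rw [lo03 h32] at h
        simp only [Option.some.injEq, Nat.pair_eq_pair] at h
        exact ⟨rfl, h.2.symm⟩
      · rcases hL : B.lo y with _ | u
        · rw [lo0n y hc hc3 hL] at h; simp [Nat.pair_eq_pair] at h
        · rw [lo0 y u hc hc3 hL] at h; simp [Nat.pair_eq_pair] at h
  · rcases hL : B.lo y with _ | u
    · rw [lo1n y hL] at h; simp [Nat.pair_eq_pair] at h
    · rw [lo1 y u hL] at h; simp [Nat.pair_eq_pair] at h
  · rw [lo3] at h; simp [Nat.pair_eq_pair] at h
  · rw [lo4] at h; simp at h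

lemma lo_eq3 (he2 : e2 ∈ B.E) (h02 : e0 ≠ e2) (h32 : e3 ≠ e2) (a y : ℕ) (ha : a ∈ (seFlow B vi vc e0 e2 e3).E)
    (h : (seFlow B vi vc e0 e2 e3).lo a = some (Nat.pair 3 y)) :
    a = Nat.pair 3 y := by
  rcases memE he2 h02 a ha with ⟨y', hy, hy0, rfl⟩ | ⟨y', hy, hy0, hy3, rfl⟩ |
    ⟨y', hy, hyu, rfl⟩ | ⟨y', hy, hyl, rfl⟩
  · by_cases hc : y' = e2
    · subst hc
      rcases hL : B.lo y' with _ | u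
      · rw [lo0cn hL] at h; simp [Nat.pair_eq_pair] at h
      · rw [lo0c u hL] at h; simp [Nat.pair_eq_pair] at h
    · by_cases hc3 : y' = e3
      · subst hc3; rw [lo03 h32] at h; simp [Nat.pair_eq_pair] at h
      · rcases hL : B.lo y' with _ | u
        · rw [lo0n y' hc hc3 hL] at h; simp [Nat.pair_eq_pair] at h
        · rw [lo0 y' u hc hc3 hL] at h; simp [Nat.pair_eq_pair] at h
  · rcases hL : B.lo y' with _ | u
    · rw [lo1n y' hL] at h; simp [Nat.pair_eq_pair] at h
    · rw [lo1 y' u hL] at h; simp [Nat.pair_eq_pair] at h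
  · rw [lo3] at h
    simp only [Option.some.injEq, Nat.pair_eq_pair] at h
    rw [h.2]
  · rw [lo4] at h; simp at h

lemma up_eq4 (he2 : e2 ∈ B.E) (h02 : e0 ≠ e2) (a y : ℕ) (ha : a ∈ (seFlow B vi vc e0 e2 e3).E)
    (h : (seFlow B vi vc e0 e2 e3).up a = some (Nat.pair 4 y)) :
    a = Nat.pair 4 y := by
  rcases memE he2 h02 a ha with ⟨y', hy, hy0, rfl⟩ | ⟨y', hy, hy0, hy3, rfl⟩ |
    ⟨y', hy, hyu, rfl⟩ | ⟨y', hy, hyl, rfl⟩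
  · by_cases hc : y' = e2
    · subst hc
      rcases hU : B.up e3 with _ | u
      · rw [up0cn hU] at h; simp [Nat.pair_eq_pair] at h
      · rw [up0c u hU] at h; simp [Nat.pair_eq_pair] at h
    · rcases hU : B.up y' with _ | u
      · rw [up0n y' hc hU] at h; simp [Nat.pair_eq_pair] at h
      · rw [up0 y' u hc hU] at h; simp [Nat.pair_eq_pair] at h
  · by_cases hc : y' = e2
    · subst hc; rw [up12] at h; simp [Nat.pair_eq_pair] at h
    · rcases hU : B.up y' with _ | u
      · rw [up1n y' hc hU] at h; simp [Nat.pair_eq_pair] at h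
      · rw [up1 y' u hc hU] at h; simp [Nat.pair_eq_pair] at h
  · rw [up3] at h; simp at h
  · rw [up4] at h
    simp only [Option.some.injEq, Nat.pair_eq_pair] at h
    rw [h.2]

lemma up_eq3 (he2 : e2 ∈ B.E) (h02 : e0 ≠ e2) (a y : ℕ) (ha : a ∈ (seFlow B vi vc e0 e2 e3).E)
    (h : (seFlow B vi vc e0 e2 e3).up a = some (Nat.pair 3 y)) :
    (a = Nat.pair 0 y ∧ y ≠ e2 ∧ y ≠ e0 ∧ y ∈ B.E ∧ B.up y = none) ∨
    (a = Nat.pair 1 y ∧ y ≠ e2 ∧ y ≠ e0 ∧ y ≠ e3 ∧ y ∈ B.E ∧ B.up y = none) ∨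
    (a = Nat.pair 0 e2 ∧ y = e3 ∧ B.up e3 = none) := by
  rcases memE he2 h02 a ha with ⟨y', hy, hy0, rfl⟩ | ⟨y', hy, hy0, hy3, rfl⟩ |
    ⟨y', hy, hyu, rfl⟩ | ⟨y', hy, hyl, rfl⟩
  · by_cases hc : y' = e2
    · subst hc
      rcases hU : B.up e3 with _ | u
      · rw [up0cn hU] at h
        simp only [Option.some.injEq, Nat.pair_eq_pair] at h
        exact Or.inr (Or.inr ⟨rfl, h.2.symm, by simp [hU]⟩)
      · rw [up0c u hU] at h; simp [Nat.pair_eq_pair] at h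
    · rcases hU : B.up y' with _ | u
      · rw [up0n y' hc hU] at h
        simp only [Option.some.injEq, Nat.pair_eq_pair] at h
        obtain ⟨-, rfl⟩ := h
        exact Or.inl ⟨rfl, hc, hy0, hy, by simp [hU]⟩
      · rw [up0 y' u hc hU] at h; simp [Nat.pair_eq_pair] at h
  · by_cases hc : y' = e2
    · subst hc; rw [up12] at h; simp [Nat.pair_eq_pair] at h
    · rcases hU : B.up y' with _ | u
      · rw [up1n y' hc hU] at h
        simp only [Option.some.injEq, Nat.pair_eq_pair] at h
        obtain ⟨-, rfl⟩ := h
        exact Or.inr (Or.inl ⟨rfl, hc, hy0, hy3, hy, by simp [hU]⟩)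
      · rw [up1 y' u hc hU] at h; simp [Nat.pair_eq_pair] at h
  · rw [up3] at h; simp at h
  · rw [up4] at h; simp [Nat.pair_eq_pair] at h

lemma lo_eq4 (he2 : e2 ∈ B.E) (h02 : e0 ≠ e2) (h32 : e3 ≠ e2) (a y : ℕ) (ha : a ∈ (seFlow B vi vc e0 e2 e3).E)
    (h : (seFlow B vi vc e0 e2 e3).lo a = some (Nat.pair 4 y)) :
    (a = Nat.pair 0 y ∧ y ≠ e2 ∧ y ≠ e3 ∧ y ≠ e0 ∧ y ∈ B.E ∧ B.lo y = none) ∨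
    (a = Nat.pair 1 y ∧ y ≠ e3 ∧ y ≠ e0 ∧ y ∈ B.E ∧ B.lo y = none) ∨
    (a = Nat.pair 0 e2 ∧ y = e2 ∧ B.lo e2 = none) := by
  rcases memE he2 h02 a ha with ⟨y', hy, hy0, rfl⟩ | ⟨y', hy, hy0, hy3, rfl⟩ |
    ⟨y', hy, hyu, rfl⟩ | ⟨y', hy, hyl, rfl⟩
  · by_cases hc : y' = e2
    · subst hc
      rcases hL : B.lo y' with _ | u
      · rw [lo0cn hL] at h
        simp only [Option.some.injEq, Nat.pair_eq_pair] at h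
        exact Or.inr (Or.inr ⟨rfl, h.2.symm, by simp [hL]⟩)
      · rw [lo0c u hL] at h; simp [Nat.pair_eq_pair] at h
    · by_cases hc3 : y' = e3
      · subst hc3; rw [lo03 h32] at h; simp [Nat.pair_eq_pair] at h
      · rcases hL : B.lo y' with _ | u
        · rw [lo0n y' hc hc3 hL] at h
          simp only [Option.some.injEq, Nat.pair_eq_pair] at h
          obtain ⟨-, rfl⟩ := h
          exact Or.inl ⟨rfl, hc, hc3, hy0, hy, by simp [hL]⟩
        · rw [lo0 y' u hc hc3 hL] at h; simp [Nat.pair_eq_pair] at h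
  · rcases hL : B.lo y' with _ | u
    · rw [lo1n y' hL] at h
      simp only [Option.some.injEq, Nat.pair_eq_pair] at h
      obtain ⟨-, rfl⟩ := h
      exact Or.inr (Or.inl ⟨rfl, hy3, hy0, hy, by simp [hL]⟩)
    · rw [lo1 y' u hL] at h; simp [Nat.pair_eq_pair] at h
  · rw [lo3] at h; simp [Nat.pair_eq_pair] at h
  · rw [lo4] at h; simp at h

end SEFB

end SE15

namespace SE15

open PreFlow

/-- The expansion of an edge of `seFlow` into a path of `B`. -/
def exp (e0 e2 e3 : ℕ) (p : ℕ × Bool) : List (ℕ × Bool) :=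
  if p.1 = Nat.pair 0 e2 then
    (if p.2 then [(e3, true), (e0, false), (e2, true)]
     else [(e2, false), (e0, true), (e3, false)])
  else [((Nat.unpair p.1).2, p.2)]

/-- Projection of points of `seFlow` to points of `B`. -/
def pv (x : ℕ) : VPt :=
  if (Nat.unpair x).1 = 3 then .top
  else if (Nat.unpair x).1 = 4 then .bot
  else .ver (Nat.unpair x).2

def trans (e0 e2 e3 : ℕ) (w : List (ℕ × Bool)) : List (ℕ × Bool) :=
  w.flatMap (exp e0 e2 e3)

lemma exp_len_pos (e0 e2 e3 : ℕ) (p : ℕ × Bool) : 0 < (exp e0 e2 e3 p).length := by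
  unfold exp; split_ifs <;> simp

lemma exp_ne (e0 e2 e3 : ℕ) (p : ℕ × Bool) : exp e0 e2 e3 p ≠ [] :=
  ne_nil_of_len (exp_len_pos e0 e2 e3 p)

lemma exp_head (e0 e2 e3 : ℕ) (p : ℕ × Bool) : (exp e0 e2 e3 p).getD 0 pdf
    = ((if p.1 = Nat.pair 0 e2 then (if p.2 then e3 else e2) else (Nat.unpair p.1).2), p.2) := by
  rcases p with ⟨a, b⟩
  cases b <;> by_cases h : a = Nat.pair 0 e2 <;> simp [exp, h, pdf]

lemma exp_last (e0 e2 e3 : ℕ) (p : ℕ × Bool) :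
    (exp e0 e2 e3 p).getD ((exp e0 e2 e3 p).length - 1) pdf
    = ((if p.1 = Nat.pair 0 e2 then (if p.2 then e2 else e3) else (Nat.unpair p.1).2), p.2) := by
  rcases p with ⟨a, b⟩
  cases b <;> by_cases h : a = Nat.pair 0 e2 <;> simp [exp, h, pdf]

lemma trans_cons (e0 e2 e3 : ℕ) (p : ℕ × Bool) (w : List (ℕ × Bool)) :
    trans e0 e2 e3 (p :: w) = exp e0 e2 e3 p ++ trans e0 e2 e3 w := by
  simp [trans, List.flatMap_cons]

lemma trans_ne (e0 e2 e3 : ℕ) (w : List (ℕ × Bool)) (hw : w ≠ []) :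
    trans e0 e2 e3 w ≠ [] := by
  cases w with
  | nil => exact absurd rfl hw
  | cons p w =>
    rw [trans_cons]
    exact ne_nil_of_len (by simp only [List.length_append]; have := exp_len_pos e0 e2 e3 p; omega)

lemma trans_head (e0 e2 e3 : ℕ) (p : ℕ × Bool) (w : List (ℕ × Bool)) :
    (trans e0 e2 e3 (p :: w)).getD 0 pdf = (exp e0 e2 e3 p).getD 0 pdf := by
  rw [trans_cons, List.getD_append _ _ _ _ (exp_len_pos e0 e2 e3 p)]

lemma trans_last (e0 e2 e3 : ℕ) : ∀ (w : List (ℕ × Bool)), w ≠ [] →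
    (trans e0 e2 e3 w).getD ((trans e0 e2 e3 w).length - 1) pdf
    = (exp e0 e2 e3 (w.getD (w.length - 1) pdf)).getD
        ((exp e0 e2 e3 (w.getD (w.length - 1) pdf)).length - 1) pdf := by
  intro w
  induction w with
  | nil => intro h; exact absurd rfl h
  | cons p w ih =>
    intro _
    cases w with
    | nil =>
      simp [trans, List.flatMap_cons]
    | cons q w' =>
      rw [trans_cons]
      have htne : trans e0 e2 e3 (q :: w') ≠ [] := trans_ne e0 e2 e3 _ (by simp)
      have htpos : 0 < (trans e0 e2 e3 (q :: w')).length := List.length_pos_iff.2 htne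
      rw [List.length_append,
        List.getD_append_right _ _ _ _ (by omega)]
      have e1 : (exp e0 e2 e3 p).length + (trans e0 e2 e3 (q :: w')).length - 1
          - (exp e0 e2 e3 p).length = (trans e0 e2 e3 (q :: w')).length - 1 := by omega
      rw [e1, ih (by simp)]
      have e2' : (p :: q :: w').length - 1 = ((q :: w').length - 1) + 1 := by simp
      rw [e2', List.getD_cons_succ]

lemma dw_single {F : PreFlow} {q : ℕ × Bool} (hq : q.1 ∈ F.E) {ν ν' : VPt}
    (hs : StartOK F ν q) (he : EndOK F ν' q) : DW F ν ν' [q] := by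
  refine ⟨by simp, ?_, ?_, by simpa using hs, by simpa using he⟩
  · intro p hp; rw [List.mem_singleton] at hp; rw [hp]; exact hq
  · intro i hi; simp at hi

/-- The context of a simple-edge reduction. -/
structure SECtx (B : PreFlow) (vi vc e0 e2 e3 : ℕ) : Prop where
  hvi : vi ∈ B.V
  hvc : vc ∈ B.V
  hηi : B.η vi = .aiDown
  hηc : B.η vc = .aiUp
  he0 : e0 ∈ B.E
  he2 : e2 ∈ B.E
  he3 : e3 ∈ B.E
  h02 : e0 ≠ e2
  h03 : e0 ≠ e3
  h23 : e2 ≠ e3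
  hu0 : B.up e0 = some vi
  hl0 : B.lo e0 = some vc
  hu2 : B.up e2 = some vi
  hl3 : B.lo e3 = some vc

section EXDW

variable {B : PreFlow} {vi vc e0 e2 e3 : ℕ}

lemma pv0 (u : ℕ) : pv (Nat.pair 0 u) = .ver u := by simp [pv, Nat.unpair_pair]
lemma pv1 (u : ℕ) : pv (Nat.pair 1 u) = .ver u := by simp [pv, Nat.unpair_pair]
lemma pv3 (u : ℕ) : pv (Nat.pair 3 u) = .top := by simp [pv, Nat.unpair_pair]
lemma pv4 (u : ℕ) : pv (Nat.pair 4 u) = .bot := by simp [pv, Nat.unpair_pair]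

lemma eTail_true (F : PreFlow) (a : ℕ) : eTail F (a, true) = F.up a := rfl
lemma eTail_false (F : PreFlow) (a : ℕ) : eTail F (a, false) = F.lo a := rfl
lemma eHead_true (F : PreFlow) (a : ℕ) : eHead F (a, true) = F.lo a := rfl
lemma eHead_false (F : PreFlow) (a : ℕ) : eHead F (a, false) = F.up a := rfl

lemma exdw (ctx : SECtx B vi vc e0 e2 e3) (p : ℕ × Bool)
    (hpE : p.1 ∈ (seFlow B vi vc e0 e2 e3).E)
    (x z : ℕ)
    (ht : eTail (seFlow B vi vc e0 e2 e3) p = some x)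
    (hh : eHead (seFlow B vi vc e0 e2 e3) p = some z)
    (hx : (Nat.unpair x).1 ≠ 2) (hz : (Nat.unpair z).1 ≠ 2) :
    DW B (pv x) (pv z) (exp e0 e2 e3 p) := by
  rcases p with ⟨a, b⟩
  rcases memE ctx.he2 ctx.h02 a hpE with ⟨y, hy, hy0, rfl⟩ | ⟨y, hy, hy0, hy3, rfl⟩ |
    ⟨y, hy, hyu, rfl⟩ | ⟨y, hy, hyl, rfl⟩
  · -- hat copy (or the crossing edge)
    by_cases hc2 : y = e2
    · -- crossing edge
      subst hc2
      have hexp : (Nat.pair 0 y, b).1 = Nat.pair 0 y := rfl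
      cases b
      · -- upwards traversal
        rw [eTail_false] at ht
        rw [eHead_false] at hh
        have hexp2 : exp e0 y e3 (Nat.pair 0 y, false)
            = [(y, false), (e0, true), (e3, false)] := by
          simp [exp]
        rw [hexp2]
        have hlink0 : LinkOK B (y, false) (e0, true) := by
          refine ⟨vi, ctx.hvi, ?_, ?_, Or.inr ⟨Or.inl ctx.hηi, fun hc => ctx.h02 hc.symm⟩⟩
          · show B.up y = some vi; exact ctx.hu2
          · show B.up e0 = some vi; exact ctx.hu0
        have hlink1 : LinkOK B (e0, true) (e3, false) := by
          refine ⟨vc, ctx.hvc, ?_, ?_, Or.inr ⟨Or.inr ctx.hηc, ctx.h03⟩⟩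
          · show B.lo e0 = some vc; exact ctx.hl0
          · show B.lo e3 = some vc; exact ctx.hl3
        refine ⟨by simp, ?_, ?_, ?_, ?_⟩
        · intro q hq
          simp only [List.mem_cons, List.mem_singleton] at hq
          rcases hq with rfl | rfl | rfl | h
          · exact ctx.he2
          · exact ctx.he0
          · exact ctx.he3
          · simp at h
        · intro i hi
          simp only [List.length_cons, List.length_nil] at hi
          rcases i with _ | _ | i
          · exact hlink0
          · exact hlink1
          · omega
        · rcases hL : B.lo y with _ | u
          · rw [lo0cn hL] at ht
            obtain rfl : Nat.pair 4 y = x := Option.some.inj ht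
            rw [pv4]
            exact ⟨rfl, hL⟩
          · rw [lo0c u hL] at ht
            obtain rfl : Nat.pair 0 u = x := Option.some.inj ht
            rw [pv0]
            show B.lo y = some u
            exact hL
        · rcases hU : B.up e3 with _ | u
          · rw [up0cn hU] at hh
            obtain rfl : Nat.pair 3 e3 = z := Option.some.inj hh
            rw [pv3]
            exact ⟨rfl, hU⟩
          · rw [up0c u hU] at hh
            obtain rfl : Nat.pair 1 u = z := Option.some.inj hh
            rw [pv1]
            show B.up e3 = some u
            exact hU
      · -- downwards traversal
        rw [eTail_true] at ht
        rw [eHead_true] at hh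
        have hexp2 : exp e0 y e3 (Nat.pair 0 y, true)
            = [(e3, true), (e0, false), (y, true)] := by
          simp [exp]
        rw [hexp2]
        have hlink0 : LinkOK B (e3, true) (e0, false) := by
          refine ⟨vc, ctx.hvc, ?_, ?_, Or.inr ⟨Or.inr ctx.hηc, fun hc => ctx.h03 hc.symm⟩⟩
          · show B.lo e3 = some vc; exact ctx.hl3
          · show B.lo e0 = some vc; exact ctx.hl0
        have hlink1 : LinkOK B (e0, false) (y, true) := by
          refine ⟨vi, ctx.hvi, ?_, ?_, Or.inr ⟨Or.inl ctx.hηi, ctx.h02⟩⟩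
          · show B.up e0 = some vi; exact ctx.hu0
          · show B.up y = some vi; exact ctx.hu2
        refine ⟨by simp, ?_, ?_, ?_, ?_⟩
        · intro q hq
          simp only [List.mem_cons, List.mem_singleton] at hq
          rcases hq with rfl | rfl | rfl | h
          · exact ctx.he3
          · exact ctx.he0
          · exact ctx.he2
          · simp at h
        · intro i hi
          simp only [List.length_cons, List.length_nil] at hi
          rcases i with _ | _ | i
          · exact hlink0
          · exact hlink1
          · omega
        · rcases hU : B.up e3 with _ | u
          · rw [up0cn hU] at ht
            obtain rfl : Nat.pair 3 e3 = x := Option.some.inj ht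
            rw [pv3]
            exact ⟨rfl, hU⟩
          · rw [up0c u hU] at ht
            obtain rfl : Nat.pair 1 u = x := Option.some.inj ht
            rw [pv1]
            show B.up e3 = some u
            exact hU
        · rcases hL : B.lo y with _ | u
          · rw [lo0cn hL] at hh
            obtain rfl : Nat.pair 4 y = z := Option.some.inj hh
            rw [pv4]
            exact ⟨rfl, hL⟩
          · rw [lo0c u hL] at hh
            obtain rfl : Nat.pair 0 u = z := Option.some.inj hh
            rw [pv0]
            show B.lo y = some u
            exact hL
    · -- genuine hat copy
      have hexp2 : exp e0 e2 e3 (Nat.pair 0 y, b) = [(y, b)] := by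
        unfold exp
        rw [if_neg (by simp [Nat.pair_eq_pair]; intro h; exact absurd h hc2)]
        simp [Nat.unpair_pair]
      rw [hexp2]
      by_cases hc3 : y = e3
      · subst hc3
        cases b
        · rw [eTail_false] at ht
          rw [lo03 (fun hc => hc2 hc)] at ht
          obtain rfl : Nat.pair 2 1 = x := Option.some.inj ht
          rw [Nat.unpair_pair] at hx
          exact absurd rfl hx
        · rw [eHead_true] at hh
          rw [lo03 (fun hc => hc2 hc)] at hh
          obtain rfl : Nat.pair 2 1 = z := Option.some.inj hh
          rw [Nat.unpair_pair] at hz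
          exact absurd rfl hz
      · cases b
        · rw [eTail_false] at ht
          rw [eHead_false] at hh
          refine dw_single hy ?_ ?_
          · rcases hL : B.lo y with _ | u
            · rw [lo0n y hc2 hc3 hL] at ht
              obtain rfl : Nat.pair 4 y = x := Option.some.inj ht
              rw [pv4]
              exact ⟨rfl, hL⟩
            · rw [lo0 y u hc2 hc3 hL] at ht
              obtain rfl : Nat.pair 0 u = x := Option.some.inj ht
              rw [pv0]
              show B.lo y = some u
              exact hL
          · rcases hU : B.up y with _ | u
            · rw [up0n y hc2 hU] at hh
              obtain rfl : Nat.pair 3 y = z := Option.some.inj hh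
              rw [pv3]
              exact ⟨rfl, hU⟩
            · rw [up0 y u hc2 hU] at hh
              obtain rfl : Nat.pair 0 u = z := Option.some.inj hh
              rw [pv0]
              show B.up y = some u
              exact hU
        · rw [eTail_true] at ht
          rw [eHead_true] at hh
          refine dw_single hy ?_ ?_
          · rcases hU : B.up y with _ | u
            · rw [up0n y hc2 hU] at ht
              obtain rfl : Nat.pair 3 y = x := Option.some.inj ht
              rw [pv3]
              exact ⟨rfl, hU⟩
            · rw [up0 y u hc2 hU] at ht
              obtain rfl : Nat.pair 0 u = x := Option.some.inj ht
              rw [pv0]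
              show B.up y = some u
              exact hU
          · rcases hL : B.lo y with _ | u
            · rw [lo0n y hc2 hc3 hL] at hh
              obtain rfl : Nat.pair 4 y = z := Option.some.inj hh
              rw [pv4]
              exact ⟨rfl, hL⟩
            · rw [lo0 y u hc2 hc3 hL] at hh
              obtain rfl : Nat.pair 0 u = z := Option.some.inj hh
              rw [pv0]
              show B.lo y = some u
              exact hL
  · -- tilde copy
    have hexp2 : exp e0 e2 e3 (Nat.pair 1 y, b) = [(y, b)] := by
      unfold exp
      rw [if_neg (by simp [Nat.pair_eq_pair])]
      simp [Nat.unpair_pair]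
    rw [hexp2]
    by_cases hc2 : y = e2
    · subst hc2
      cases b
      · rw [eHead_false] at hh
        rw [up12] at hh
        obtain rfl : Nat.pair 2 0 = z := Option.some.inj hh
        rw [Nat.unpair_pair] at hz
        exact absurd rfl hz
      · rw [eTail_true] at ht
        rw [up12] at ht
        obtain rfl : Nat.pair 2 0 = x := Option.some.inj ht
        rw [Nat.unpair_pair] at hx
        exact absurd rfl hx
    · cases b
      · rw [eTail_false] at ht
        rw [eHead_false] at hh
        refine dw_single hy ?_ ?_
        · rcases hL : B.lo y with _ | u
          · rw [lo1n y hL] at ht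
            obtain rfl : Nat.pair 4 y = x := Option.some.inj ht
            rw [pv4]
            exact ⟨rfl, hL⟩
          · rw [lo1 y u hL] at ht
            obtain rfl : Nat.pair 1 u = x := Option.some.inj ht
            rw [pv1]
            show B.lo y = some u
            exact hL
        · rcases hU : B.up y with _ | u
          · rw [up1n y hc2 hU] at hh
            obtain rfl : Nat.pair 3 y = z := Option.some.inj hh
            rw [pv3]
            exact ⟨rfl, hU⟩
          · rw [up1 y u hc2 hU] at hh
            obtain rfl : Nat.pair 1 u = z := Option.some.inj hh
            rw [pv1]
            show B.up y = some u
            exact hU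
      · rw [eTail_true] at ht
        rw [eHead_true] at hh
        refine dw_single hy ?_ ?_
        · rcases hU : B.up y with _ | u
          · rw [up1n y hc2 hU] at ht
            obtain rfl : Nat.pair 3 y = x := Option.some.inj ht
            rw [pv3]
            exact ⟨rfl, hU⟩
          · rw [up1 y u hc2 hU] at ht
            obtain rfl : Nat.pair 1 u = x := Option.some.inj ht
            rw [pv1]
            show B.up y = some u
            exact hU
        · rcases hL : B.lo y with _ | u
          · rw [lo1n y hL] at hh
            obtain rfl : Nat.pair 4 y = z := Option.some.inj hh
            rw [pv4]
            exact ⟨rfl, hL⟩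
          · rw [lo1 y u hL] at hh
            obtain rfl : Nat.pair 1 u = z := Option.some.inj hh
            rw [pv1]
            show B.lo y = some u
            exact hL
  · -- new top edge
    cases b
    · rw [eHead_false, up3] at hh
      exact absurd hh (by simp)
    · rw [eTail_true, up3] at ht
      exact absurd ht (by simp)
  · -- new bottom edge
    cases b
    · rw [eTail_false, lo4] at ht
      exact absurd ht (by simp)
    · rw [eHead_true, lo4] at hh
      exact absurd hh (by simp)

end EXDW

end SE15

namespace SE15

open PreFlow

section JUNC

variable {B : PreFlow} {vi vc e0 e2 e3 : ℕ}

lemma head_copy (he2 : e2 ∈ B.E) (h02 : e0 ≠ e2) {p : ℕ × Bool}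
    (hp : p.1 ∈ (seFlow B vi vc e0 e2 e3).E) {t u' : ℕ} (ht01 : t = 0 ∨ t = 1)
    (hh : eHead (seFlow B vi vc e0 e2 e3) p = some (Nat.pair t u')) :
    p.1 = Nat.pair 0 e2 ∨
    (∃ y, p.1 = Nat.pair t y ∧ (t = 0 → y ≠ e2) ∧ (t = 1 → y ≠ e3)) := by
  rcases p with ⟨a, b⟩
  rcases memE he2 h02 a hp with ⟨y, hy, hy0, rfl⟩ | ⟨y, hy, hy0, hy3, rfl⟩ |
    ⟨y, hy, hyu, rfl⟩ | ⟨y, hy, hyl, rfl⟩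
  · by_cases hc2 : y = e2
    · exact Or.inl (by rw [hc2])
    · right
      cases b
      · rw [eHead_false] at hh
        rcases hU : B.up y with _ | u
        · rw [up0n y hc2 hU] at hh
          have := Option.some.inj hh
          rw [Nat.pair_eq_pair] at this
          rcases ht01 with rfl | rfl <;> omega
        · rw [up0 y u hc2 hU] at hh
          have := Option.some.inj hh
          rw [Nat.pair_eq_pair] at this
          obtain ⟨rfl, -⟩ : t = 0 ∧ u' = u := ⟨this.1.symm, this.2.symm⟩
          exact ⟨y, rfl, fun _ => hc2, fun h => absurd h (by omega)⟩
      · rw [eHead_true] at hh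
        by_cases hc3 : y = e3
        · subst hc3
          rw [lo03 (fun hc => hc2 hc)] at hh
          have := Option.some.inj hh
          rw [Nat.pair_eq_pair] at this
          rcases ht01 with rfl | rfl <;> omega
        · rcases hL : B.lo y with _ | u
          · rw [lo0n y hc2 hc3 hL] at hh
            have := Option.some.inj hh
            rw [Nat.pair_eq_pair] at this
            rcases ht01 with rfl | rfl <;> omega
          · rw [lo0 y u hc2 hc3 hL] at hh
            have := Option.some.inj hh
            rw [Nat.pair_eq_pair] at this
            obtain ⟨rfl, -⟩ : t = 0 ∧ u' = u := ⟨this.1.symm, this.2.symm⟩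
            exact ⟨y, rfl, fun _ => hc2, fun h => absurd h (by omega)⟩
  · right
    cases b
    · rw [eHead_false] at hh
      by_cases hc2 : y = e2
      · subst hc2
        rw [up12] at hh
        have := Option.some.inj hh
        rw [Nat.pair_eq_pair] at this
        rcases ht01 with rfl | rfl <;> omega
      · rcases hU : B.up y with _ | u
        · rw [up1n y hc2 hU] at hh
          have := Option.some.inj hh
          rw [Nat.pair_eq_pair] at this
          rcases ht01 with rfl | rfl <;> omega
        · rw [up1 y u hc2 hU] at hh
          have := Option.some.inj hh
          rw [Nat.pair_eq_pair] at this
          obtain ⟨rfl, -⟩ : t = 1 ∧ u' = u := ⟨this.1.symm, this.2.symm⟩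
          exact ⟨y, rfl, fun h => absurd h (by omega), fun _ => hy3⟩
    · rw [eHead_true] at hh
      rcases hL : B.lo y with _ | u
      · rw [lo1n y hL] at hh
        have := Option.some.inj hh
        rw [Nat.pair_eq_pair] at this
        rcases ht01 with rfl | rfl <;> omega
      · rw [lo1 y u hL] at hh
        have := Option.some.inj hh
        rw [Nat.pair_eq_pair] at this
        obtain ⟨rfl, -⟩ : t = 1 ∧ u' = u := ⟨this.1.symm, this.2.symm⟩
        exact ⟨y, rfl, fun h => absurd h (by omega), fun _ => hy3⟩
  · cases b
    · rw [eHead_false, up3] at hh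
      exact absurd hh (by simp)
    · rw [eHead_true, lo3] at hh
      have := Option.some.inj hh
      rw [Nat.pair_eq_pair] at this
      rcases ht01 with rfl | rfl <;> omega
  · cases b
    · rw [eHead_false, up4] at hh
      have := Option.some.inj hh
      rw [Nat.pair_eq_pair] at this
      rcases ht01 with rfl | rfl <;> omega
    · rw [eHead_true, lo4] at hh
      exact absurd hh (by simp)

lemma tail_copy (he2 : e2 ∈ B.E) (h02 : e0 ≠ e2) {q : ℕ × Bool}
    (hq : q.1 ∈ (seFlow B vi vc e0 e2 e3).E) {t u' : ℕ} (ht01 : t = 0 ∨ t = 1)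
    (ht : eTail (seFlow B vi vc e0 e2 e3) q = some (Nat.pair t u')) :
    q.1 = Nat.pair 0 e2 ∨
    (∃ y, q.1 = Nat.pair t y ∧ (t = 0 → y ≠ e2) ∧ (t = 1 → y ≠ e3)) := by
  rcases q with ⟨a, b⟩
  cases b
  · exact head_copy (p := (a, true)) he2 h02 (by exact hq) ht01
      (by rw [eHead_true]; rw [eTail_false] at ht; exact ht)
  · exact head_copy (p := (a, false)) he2 h02 (by exact hq) ht01
      (by rw [eHead_false]; rw [eTail_true] at ht; exact ht)

lemma junction (ctx : SECtx B vi vc e0 e2 e3) {p q : ℕ × Bool}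
    (hp : p.1 ∈ (seFlow B vi vc e0 e2 e3).E) (hq : q.1 ∈ (seFlow B vi vc e0 e2 e3).E)
    {t u' : ℕ} (ht01 : t = 0 ∨ t = 1)
    (hh : eHead (seFlow B vi vc e0 e2 e3) p = some (Nat.pair t u'))
    (htq : eTail (seFlow B vi vc e0 e2 e3) q = some (Nat.pair t u'))
    (hne : p.1 ≠ q.1) :
    (if p.1 = Nat.pair 0 e2 then (if p.2 then e2 else e3) else (Nat.unpair p.1).2)
    ≠ (if q.1 = Nat.pair 0 e2 then (if q.2 then e3 else e2) else (Nat.unpair q.1).2) := by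
  by_cases hpc : p.1 = Nat.pair 0 e2 <;> by_cases hqc : q.1 = Nat.pair 0 e2
  · exact absurd (hpc.trans hqc.symm) hne
  · rw [if_pos hpc, if_neg hqc]
    rcases tail_copy ctx.he2 ctx.h02 hq ht01 htq with h | ⟨y, hqy, hy2, hy3⟩
    · exact absurd h hqc
    rcases p with ⟨a, b⟩
    simp only at hpc
    subst hpc
    cases b
    · -- upward crossing : last edge is e3, lands in tilde copy
      rw [eHead_false] at hh
      rcases hU : B.up e3 with _ | u
      · rw [up0cn hU] at hh
        have := Option.some.inj hh
        rw [Nat.pair_eq_pair] at this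
        rcases ht01 with rfl | rfl <;> omega
      · rw [up0c u hU] at hh
        have := Option.some.inj hh
        rw [Nat.pair_eq_pair] at this
        obtain rfl : t = 1 := this.1.symm
        simp only [if_neg (by simp : ¬(false = true))]
        rw [hqy, Nat.unpair_pair]
        exact fun hc => (hy3 rfl) hc.symm
    · -- downward crossing : last edge is e2, lands in hat copy
      rw [eHead_true] at hh
      rcases hL : B.lo e2 with _ | u
      · rw [lo0cn hL] at hh
        have := Option.some.inj hh
        rw [Nat.pair_eq_pair] at this
        rcases ht01 with rfl | rfl <;> omega
      · rw [lo0c u hL] at hh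
        have := Option.some.inj hh
        rw [Nat.pair_eq_pair] at this
        obtain rfl : t = 0 := this.1.symm
        simp only [if_pos rfl]
        rw [hqy, Nat.unpair_pair]
        exact fun hc => (hy2 rfl) hc.symm
  · rw [if_neg hpc, if_pos hqc]
    rcases head_copy ctx.he2 ctx.h02 hp ht01 hh with h | ⟨y, hpy, hy2, hy3⟩
    · exact absurd h hpc
    rcases q with ⟨a, b⟩
    simp only at hqc
    subst hqc
    cases b
    · -- q goes upward through the crossing : first edge is e2, leaves hat copy
      rw [eTail_false] at htq
      rcases hL : B.lo e2 with _ | u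
      · rw [lo0cn hL] at htq
        have := Option.some.inj htq
        rw [Nat.pair_eq_pair] at this
        rcases ht01 with rfl | rfl <;> omega
      · rw [lo0c u hL] at htq
        have := Option.some.inj htq
        rw [Nat.pair_eq_pair] at this
        obtain rfl : t = 0 := this.1.symm
        simp only [if_neg (by simp : ¬(false = true))]
        rw [hpy, Nat.unpair_pair]
        exact hy2 rfl
    · rw [eTail_true] at htq
      rcases hU : B.up e3 with _ | u
      · rw [up0cn hU] at htq
        have := Option.some.inj htq
        rw [Nat.pair_eq_pair] at this
        rcases ht01 with rfl | rfl <;> omega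
      · rw [up0c u hU] at htq
        have := Option.some.inj htq
        rw [Nat.pair_eq_pair] at this
        obtain rfl : t = 1 := this.1.symm
        simp only [if_pos rfl]
        rw [hpy, Nat.unpair_pair]
        exact hy3 rfl
  · rw [if_neg hpc, if_neg hqc]
    rcases head_copy ctx.he2 ctx.h02 hp ht01 hh with h | ⟨y, hpy, -, -⟩
    · exact absurd h hpc
    rcases tail_copy ctx.he2 ctx.h02 hq ht01 htq with h | ⟨y', hqy, -, -⟩
    · exact absurd h hqc
    rw [hpy, hqy, Nat.unpair_pair, Nat.unpair_pair]
    intro hc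
    subst hc
    exact hne (hpy.trans hqy.symm)

end JUNC

end SE15

namespace SE15

open PreFlow

section CORE

variable {B : PreFlow} {vi vc e0 e2 e3 : ℕ}

lemma core_map (ctx : SECtx B vi vc e0 e2 e3) :
    ∀ (w : List (ℕ × Bool)) (x x' : ℕ),
      (Nat.unpair x).1 ≠ 2 → (Nat.unpair x').1 ≠ 2 →
      DW (seFlow B vi vc e0 e2 e3) (.ver x) (.ver x') w →
      DW B (pv x) (pv x') (trans e0 e2 e3 w) := by
  intro w
  induction w with
  | nil =>
    intro x x' _ _ h
    exact absurd rfl h.1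
  | cons p rest ih =>
    intro x x' hx hx' hdw
    obtain ⟨hne, hmem, hlink, hstart, hend⟩ := hdw
    have hpE : p.1 ∈ (seFlow B vi vc e0 e2 e3).E := hmem p List.mem_cons_self
    have hstart' : eTail (seFlow B vi vc e0 e2 e3) p = some x := by
      simpa only [List.getD_cons_zero, StartOK] using hstart
    cases rest with
    | nil =>
      have hend' : eHead (seFlow B vi vc e0 e2 e3) p = some x' := by
        simpa only [List.length_cons, List.length_nil, Nat.sub_self,
          List.getD_cons_zero, EndOK] using hend
      have h := exdw ctx p hpE x x' hstart' hend' hx hx'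
      rw [trans_cons]
      have : trans e0 e2 e3 ([] : List (ℕ × Bool)) = [] := rfl
      rw [this, List.append_nil]
      exact h
    | cons q rest' =>
      have hlink0 := hlink 0 (by simp)
      simp only [List.getD_cons_zero, List.getD_cons_succ] at hlink0
      obtain ⟨z, hzV, hh, htq, hcond⟩ := hlink0
      have hqE : q.1 ∈ (seFlow B vi vc e0 e2 e3).E := hmem q (by simp)
      rcases memV z hzV with ⟨u', hu', hz01⟩ | hz2 | hz2 | ⟨y, hyE, hyu, hz3⟩ | ⟨y, hyE, hyl, hz4⟩
      · -- the link vertex is a copy vertex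
        obtain ⟨t, ht01, rfl⟩ : ∃ t, (t = 0 ∨ t = 1) ∧ z = Nat.pair t u' := by
          rcases hz01 with rfl | rfl
          exacts [⟨0, Or.inl rfl, rfl⟩, ⟨1, Or.inr rfl, rfl⟩]
        have hu'B : u' ∈ B.V := Finset.mem_of_mem_erase (Finset.mem_of_mem_erase hu')
        have hz2' : (Nat.unpair (Nat.pair t u')).1 ≠ 2 := by
          rcases ht01 with rfl | rfl <;> simp [Nat.unpair_pair]
        have hrest : DW (seFlow B vi vc e0 e2 e3) (.ver (Nat.pair t u')) (.ver x')
            (q :: rest') := by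
          refine dw_shift ⟨hne, hmem, hlink, hstart, hend⟩ (by simp) ?_
          simpa only [List.getD_cons_zero] using htq
        have hIH := ih (Nat.pair t u') x' hz2' hx' hrest
        have hp' := exdw ctx p hpE x (Nat.pair t u') hstart' hh hx hz2'
        have hpv : pv (Nat.pair t u') = .ver u' := by
          rcases ht01 with rfl | rfl
          exacts [pv0 u', pv1 u']
        rw [hpv] at hIH hp'
        rw [trans_cons]
        refine dw_append hp' hIH hu'B ?_
        rw [exp_last]
        have hth : (trans e0 e2 e3 (q :: rest')).getD 0 pdf = (exp e0 e2 e3 q).getD 0 pdf :=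
          trans_head e0 e2 e3 q rest'
        rw [hth, exp_head]
        rcases hcond with hcd | ⟨hai, hne'⟩
        · exact Or.inl hcd
        · refine Or.inr ⟨?_, ?_⟩
          · have heq : (seFlow B vi vc e0 e2 e3).η (Nat.pair t u') = B.η u' := by
              rcases ht01 with rfl | rfl
              exacts [eta0 u', eta1 u']
            rw [heq] at hai
            exact hai
          · exact junction ctx hpE hqE ht01 hh htq hne'
      · -- link vertex (2,0) : impossible
        subst hz2
        cases hb : p.2
        · have hH : (seFlow B vi vc e0 e2 e3).up p.1 = some (Nat.pair 2 0) := by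
            rw [← eHead_false (seFlow B vi vc e0 e2 e3) p.1]
            rw [show ((p.1 : ℕ), false) = p from by rw [← hb]] at *
            exact hh
          have h1 := up_eq2 ctx.he2 ctx.h02 p.1 0 hpE hH
          cases hbq : q.2
          · have hT : (seFlow B vi vc e0 e2 e3).lo q.1 = some (Nat.pair 2 0) := by
              rw [← eTail_false (seFlow B vi vc e0 e2 e3) q.1]
              rw [show ((q.1 : ℕ), false) = q from by rw [← hbq]] at *
              exact htq
            have h2 := lo_eq2 ctx.he2 ctx.h02 (Ne.symm ctx.h23) q.1 0 hqE hT
            exact absurd h2.2 (by omega)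
          · rcases hcond with hcd | hcd
            · rw [hb, hbq] at hcd; exact absurd hcd (by simp)
            · have hT : (seFlow B vi vc e0 e2 e3).up q.1 = some (Nat.pair 2 0) := by
                rw [← eTail_true (seFlow B vi vc e0 e2 e3) q.1]
                rw [show ((q.1 : ℕ), true) = q from by rw [← hbq]] at *
                exact htq
              have h2 := up_eq2 ctx.he2 ctx.h02 q.1 0 hqE hT
              exact absurd (h1.1.trans h2.1.symm) hcd.2
        · have hH : (seFlow B vi vc e0 e2 e3).lo p.1 = some (Nat.pair 2 0) := by
            rw [← eHead_true (seFlow B vi vc e0 e2 e3) p.1]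
            rw [show ((p.1 : ℕ), true) = p from by rw [← hb]] at *
            exact hh
          have h1 := lo_eq2 ctx.he2 ctx.h02 (Ne.symm ctx.h23) p.1 0 hpE hH
          exact absurd h1.2 (by omega)
      · -- link vertex (2,1) : impossible
        subst hz2
        cases hb : p.2
        · have hH : (seFlow B vi vc e0 e2 e3).up p.1 = some (Nat.pair 2 1) := by
            rw [← eHead_false (seFlow B vi vc e0 e2 e3) p.1]
            rw [show ((p.1 : ℕ), false) = p from by rw [← hb]] at *
            exact hh
          have h1 := up_eq2 ctx.he2 ctx.h02 p.1 1 hpE hH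
          exact absurd h1.2 (by omega)
        · have hH : (seFlow B vi vc e0 e2 e3).lo p.1 = some (Nat.pair 2 1) := by
            rw [← eHead_true (seFlow B vi vc e0 e2 e3) p.1]
            rw [show ((p.1 : ℕ), true) = p from by rw [← hb]] at *
            exact hh
          have h1 := lo_eq2 ctx.he2 ctx.h02 (Ne.symm ctx.h23) p.1 1 hpE hH
          cases hbq : q.2
          · have hT : (seFlow B vi vc e0 e2 e3).lo q.1 = some (Nat.pair 2 1) := by
              rw [← eTail_false (seFlow B vi vc e0 e2 e3) q.1]
              rw [show ((q.1 : ℕ), false) = q from by rw [← hbq]] at *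
              exact htq
            have h2 := lo_eq2 ctx.he2 ctx.h02 (Ne.symm ctx.h23) q.1 1 hqE hT
            rcases hcond with hcd | hcd
            · rw [hb, hbq] at hcd; exact absurd hcd (by simp)
            · exact absurd (h1.1.trans h2.1.symm) hcd.2
          · have hT : (seFlow B vi vc e0 e2 e3).up q.1 = some (Nat.pair 2 1) := by
              rw [← eTail_true (seFlow B vi vc e0 e2 e3) q.1]
              rw [show ((q.1 : ℕ), true) = q from by rw [← hbq]] at *
              exact htq
            have h2 := up_eq2 ctx.he2 ctx.h02 q.1 1 hqE hT
            exact absurd h2.2 (by omega)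
      · -- link vertex (3,y) : impossible
        subst hz3
        cases hb : p.2
        · -- p goes up into (3,y)
          cases hbq : q.2
          · -- q also upward : q must be the new top edge, whose head is unmatched
            have hT : (seFlow B vi vc e0 e2 e3).lo q.1 = some (Nat.pair 3 y) := by
              rw [← eTail_false (seFlow B vi vc e0 e2 e3) q.1]
              rw [show ((q.1 : ℕ), false) = q from by rw [← hbq]] at *
              exact htq
            have h2 := lo_eq3 ctx.he2 ctx.h02 (Ne.symm ctx.h23) q.1 y hqE hT
            -- the head of q is `none`, but it must be matched
            have hqh : eHead (seFlow B vi vc e0 e2 e3) q = none := by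
              rw [show q = ((q.1 : ℕ), false) from by rw [← hbq]]
              rw [eHead_false, h2, up3]
            cases rest' with
            | nil =>
              have hend' : eHead (seFlow B vi vc e0 e2 e3) q = some x' := by
                simpa only [List.length_cons, List.length_nil, List.getD_cons_succ,
                  List.getD_cons_zero, EndOK] using hend
              rw [hqh] at hend'
              exact absurd hend' (by simp)
            | cons r rest'' =>
              have hlink1 := hlink 1 (by simp)
              simp only [List.getD_cons_succ, List.getD_cons_zero] at hlink1
              obtain ⟨z', _, hh', _, _⟩ := hlink1
              rw [hqh] at hh'
              exact absurd hh' (by simp)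
          · -- q downward : direction change at an acUp vertex
            rcases hcond with hcd | hcd
            · rw [hb, hbq] at hcd; exact absurd hcd (by simp)
            · have hai := hcd.1
              rw [eta3] at hai
              rcases hai with h | h <;> simp at h
        · -- p arrives downward at (3,y) : p must be the new top edge, tail unmatched
          have hH : (seFlow B vi vc e0 e2 e3).lo p.1 = some (Nat.pair 3 y) := by
            rw [← eHead_true (seFlow B vi vc e0 e2 e3) p.1]
            rw [show ((p.1 : ℕ), true) = p from by rw [← hb]] at *
            exact hh
          have h1 := lo_eq3 ctx.he2 ctx.h02 (Ne.symm ctx.h23) p.1 y hpE hH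
          have hpt : eTail (seFlow B vi vc e0 e2 e3) p = none := by
            rw [show p = ((p.1 : ℕ), true) from by rw [← hb]]
            rw [eTail_true, h1, up3]
          rw [hpt] at hstart'
          exact absurd hstart' (by simp)
      · -- link vertex (4,y) : impossible
        subst hz4
        cases hb : p.2
        · -- p's head is upward at (4,y) : p must be the new bottom edge, tail unmatched
          have hH : (seFlow B vi vc e0 e2 e3).up p.1 = some (Nat.pair 4 y) := by
            rw [← eHead_false (seFlow B vi vc e0 e2 e3) p.1]
            rw [show ((p.1 : ℕ), false) = p from by rw [← hb]] at *
            exact hh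
          have h1 := up_eq4 ctx.he2 ctx.h02 p.1 y hpE hH
          have hpt : eTail (seFlow B vi vc e0 e2 e3) p = none := by
            rw [show p = ((p.1 : ℕ), false) from by rw [← hb]]
            rw [eTail_false, h1, lo4]
          rw [hpt] at hstart'
          exact absurd hstart' (by simp)
        · cases hbq : q.2
          · -- direction change at an acDown vertex
            rcases hcond with hcd | hcd
            · rw [hb, hbq] at hcd; exact absurd hcd (by simp)
            · have hai := hcd.1
              rw [eta4] at hai
              rcases hai with h | h <;> simp at h
          · -- q continues downward : q is the new bottom edge, head unmatched
            have hT : (seFlow B vi vc e0 e2 e3).up q.1 = some (Nat.pair 4 y) := by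
              rw [← eTail_true (seFlow B vi vc e0 e2 e3) q.1]
              rw [show ((q.1 : ℕ), true) = q from by rw [← hbq]] at *
              exact htq
            have h2 := up_eq4 ctx.he2 ctx.h02 q.1 y hqE hT
            have hqh : eHead (seFlow B vi vc e0 e2 e3) q = none := by
              rw [show q = ((q.1 : ℕ), true) from by rw [← hbq]]
              rw [eHead_true, h2, lo4]
            cases rest' with
            | nil =>
              have hend' : eHead (seFlow B vi vc e0 e2 e3) q = some x' := by
                simpa only [List.length_cons, List.length_nil, List.getD_cons_succ,
                  List.getD_cons_zero, EndOK] using hend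
              rw [hqh] at hend'
              exact absurd hend' (by simp)
            | cons r rest'' =>
              have hlink1 := hlink 1 (by simp)
              simp only [List.getD_cons_succ, List.getD_cons_zero] at hlink1
              obtain ⟨z', _, hh', _, _⟩ := hlink1
              rw [hqh] at hh'
              exact absurd hh' (by simp)

end CORE

end SE15

namespace SE15

open PreFlow

lemma head_of_first {F : PreFlow} {x' : ℕ} {ν : VPt} {w : List (ℕ × Bool)}
    (h : DW F ν (.ver x') w) : ∃ z, eHead F (w.getD 0 pdf) = some z := by
  obtain ⟨hne, _, hlink, _, hend⟩ := h
  have hpos : 0 < w.length := List.length_pos_iff.2 hne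
  by_cases h1 : w.length = 1
  · have e : w.length - 1 = 0 := by omega
    rw [e] at hend
    exact ⟨x', hend⟩
  · obtain ⟨z, _, hh, _, _⟩ := hlink 0 (by omega)
    exact ⟨z, hh⟩

lemma tail_of_last {F : PreFlow} {x : ℕ} {ν : VPt} {w : List (ℕ × Bool)}
    (h : DW F (.ver x) ν w) : ∃ z, eTail F (w.getD (w.length - 1) pdf) = some z := by
  obtain ⟨hne, _, hlink, hstart, _⟩ := h
  have hpos : 0 < w.length := List.length_pos_iff.2 hne
  by_cases h1 : w.length = 1
  · have e : w.length - 1 = 0 := by omega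
    rw [e]
    exact ⟨x, hstart⟩
  · obtain ⟨z, _, _, ht, _⟩ := hlink (w.length - 2) (by omega)
    have e : w.length - 2 + 1 = w.length - 1 := by omega
    rw [e] at ht
    exact ⟨z, ht⟩

lemma trans_head' (e0 e2 e3 : ℕ) {w : List (ℕ × Bool)} (hw : w ≠ []) :
    (trans e0 e2 e3 w).getD 0 pdf = (exp e0 e2 e3 (w.getD 0 pdf)).getD 0 pdf := by
  cases w with
  | nil => exact absurd rfl hw
  | cons p rest => rw [trans_head, List.getD_cons_zero]

section EDGES

variable {B : PreFlow} {vi vc e0 e2 e3 : ℕ}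

lemma first_edge_top (ctx : SECtx B vi vc e0 e2 e3) {w : List (ℕ × Bool)} {x' ε : ℕ}
    (hdw : DW (seFlow B vi vc e0 e2 e3) (.ver (Nat.pair 3 ε)) (.ver x') w) :
    ((exp e0 e2 e3 (w.getD 0 pdf)).getD 0 pdf).1 = ε := by
  obtain ⟨hne, hmem, hlink, hstart, hend⟩ := hdw
  have hpos : 0 < w.length := List.length_pos_iff.2 hne
  set p := w.getD 0 pdf with hp
  have hpE : p.1 ∈ (seFlow B vi vc e0 e2 e3).E := hmem p (getD_mem' w 0 hpos)
  cases hb : p.2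
  · have hT : (seFlow B vi vc e0 e2 e3).lo p.1 = some (Nat.pair 3 ε) := by
      rw [← eTail_false (seFlow B vi vc e0 e2 e3) p.1]
      rw [show ((p.1 : ℕ), false) = p from by rw [← hb]]
      exact hstart
    have h1 := lo_eq3 ctx.he2 ctx.h02 (Ne.symm ctx.h23) p.1 ε hpE hT
    obtain ⟨z, hz⟩ := head_of_first ⟨hne, hmem, hlink, hstart, hend⟩
    rw [show (w.getD 0 pdf) = ((p.1 : ℕ), false) from by rw [← hb], eHead_false, h1, up3] at hz
    exact absurd hz (by simp)
  · have hT : (seFlow B vi vc e0 e2 e3).up p.1 = some (Nat.pair 3 ε) := by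
      rw [← eTail_true (seFlow B vi vc e0 e2 e3) p.1]
      rw [show ((p.1 : ℕ), true) = p from by rw [← hb]]
      exact hstart
    rw [exp_head]
    rcases up_eq3 ctx.he2 ctx.h02 p.1 ε hpE hT with ⟨hp1, hε2, -⟩ | ⟨hp1, hε2, -⟩ |
      ⟨hp1, hε3, -⟩
    · rw [if_neg (by rw [hp1]; simp [Nat.pair_eq_pair]; intro h; exact absurd h hε2), hp1,
        Nat.unpair_pair]
    · rw [if_neg (by rw [hp1]; simp [Nat.pair_eq_pair]), hp1, Nat.unpair_pair]
    · rw [if_pos hp1, hb]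
      simp [hε3]

lemma last_edge_top (ctx : SECtx B vi vc e0 e2 e3) {w : List (ℕ × Bool)} {x ε : ℕ}
    (hdw : DW (seFlow B vi vc e0 e2 e3) (.ver x) (.ver (Nat.pair 3 ε)) w) :
    ((exp e0 e2 e3 (w.getD (w.length - 1) pdf)).getD
      ((exp e0 e2 e3 (w.getD (w.length - 1) pdf)).length - 1) pdf).1 = ε := by
  obtain ⟨hne, hmem, hlink, hstart, hend⟩ := hdw
  have hpos : 0 < w.length := List.length_pos_iff.2 hne
  set q := w.getD (w.length - 1) pdf with hq
  have hqE : q.1 ∈ (seFlow B vi vc e0 e2 e3).E := hmem q (getD_mem' w _ (by omega))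
  cases hb : q.2
  · have hH : (seFlow B vi vc e0 e2 e3).up q.1 = some (Nat.pair 3 ε) := by
      rw [← eHead_false (seFlow B vi vc e0 e2 e3) q.1]
      rw [show ((q.1 : ℕ), false) = q from by rw [← hb]]
      exact hend
    rw [exp_last]
    rcases up_eq3 ctx.he2 ctx.h02 q.1 ε hqE hH with ⟨hq1, hε2, -⟩ | ⟨hq1, hε2, -⟩ |
      ⟨hq1, hε3, -⟩
    · rw [if_neg (by rw [hq1]; simp [Nat.pair_eq_pair]; intro h; exact absurd h hε2), hq1,
        Nat.unpair_pair]
    · rw [if_neg (by rw [hq1]; simp [Nat.pair_eq_pair]), hq1, Nat.unpair_pair]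
    · rw [if_pos hq1, hb, if_neg (by simp)]
      exact hε3.symm
  · have hH : (seFlow B vi vc e0 e2 e3).lo q.1 = some (Nat.pair 3 ε) := by
      rw [← eHead_true (seFlow B vi vc e0 e2 e3) q.1]
      rw [show ((q.1 : ℕ), true) = q from by rw [← hb]]
      exact hend
    have h1 := lo_eq3 ctx.he2 ctx.h02 (Ne.symm ctx.h23) q.1 ε hqE hH
    obtain ⟨z, hz⟩ := tail_of_last ⟨hne, hmem, hlink, hstart, hend⟩
    rw [← hq, show q = ((q.1 : ℕ), true) from by rw [← hb], eTail_true, h1, up3] at hz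
    exact absurd hz (by simp)

lemma first_edge_bot (ctx : SECtx B vi vc e0 e2 e3) {w : List (ℕ × Bool)} {x' ε : ℕ}
    (hdw : DW (seFlow B vi vc e0 e2 e3) (.ver (Nat.pair 4 ε)) (.ver x') w) :
    ((exp e0 e2 e3 (w.getD 0 pdf)).getD 0 pdf).1 = ε := by
  obtain ⟨hne, hmem, hlink, hstart, hend⟩ := hdw
  have hpos : 0 < w.length := List.length_pos_iff.2 hne
  set p := w.getD 0 pdf with hp
  have hpE : p.1 ∈ (seFlow B vi vc e0 e2 e3).E := hmem p (getD_mem' w 0 hpos)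
  cases hb : p.2
  · have hT : (seFlow B vi vc e0 e2 e3).lo p.1 = some (Nat.pair 4 ε) := by
      rw [← eTail_false (seFlow B vi vc e0 e2 e3) p.1]
      rw [show ((p.1 : ℕ), false) = p from by rw [← hb]]
      exact hstart
    rw [exp_head]
    rcases lo_eq4 ctx.he2 ctx.h02 (Ne.symm ctx.h23) p.1 ε hpE hT with ⟨hp1, hε2, -⟩ |
      ⟨hp1, hε3, -⟩ | ⟨hp1, hε2, -⟩
    · rw [if_neg (by rw [hp1]; simp [Nat.pair_eq_pair]; intro h; exact absurd h hε2), hp1,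
        Nat.unpair_pair]
    · rw [if_neg (by rw [hp1]; simp [Nat.pair_eq_pair]), hp1, Nat.unpair_pair]
    · rw [if_pos hp1, hb, if_neg (by simp)]
      exact hε2.symm
  · have hT : (seFlow B vi vc e0 e2 e3).up p.1 = some (Nat.pair 4 ε) := by
      rw [← eTail_true (seFlow B vi vc e0 e2 e3) p.1]
      rw [show ((p.1 : ℕ), true) = p from by rw [← hb]]
      exact hstart
    have h1 := up_eq4 ctx.he2 ctx.h02 p.1 ε hpE hT
    obtain ⟨z, hz⟩ := head_of_first ⟨hne, hmem, hlink, hstart, hend⟩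
    rw [show (w.getD 0 pdf) = ((p.1 : ℕ), true) from by rw [← hb], eHead_true, h1, lo4] at hz
    exact absurd hz (by simp)

lemma last_edge_bot (ctx : SECtx B vi vc e0 e2 e3) {w : List (ℕ × Bool)} {x ε : ℕ}
    (hdw : DW (seFlow B vi vc e0 e2 e3) (.ver x) (.ver (Nat.pair 4 ε)) w) :
    ((exp e0 e2 e3 (w.getD (w.length - 1) pdf)).getD
      ((exp e0 e2 e3 (w.getD (w.length - 1) pdf)).length - 1) pdf).1 = ε := by
  obtain ⟨hne, hmem, hlink, hstart, hend⟩ := hdw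
  have hpos : 0 < w.length := List.length_pos_iff.2 hne
  set q := w.getD (w.length - 1) pdf with hq
  have hqE : q.1 ∈ (seFlow B vi vc e0 e2 e3).E := hmem q (getD_mem' w _ (by omega))
  cases hb : q.2
  · have hH : (seFlow B vi vc e0 e2 e3).up q.1 = some (Nat.pair 4 ε) := by
      rw [← eHead_false (seFlow B vi vc e0 e2 e3) q.1]
      rw [show ((q.1 : ℕ), false) = q from by rw [← hb]]
      exact hend
    have h1 := up_eq4 ctx.he2 ctx.h02 q.1 ε hqE hH
    obtain ⟨z, hz⟩ := tail_of_last ⟨hne, hmem, hlink, hstart, hend⟩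
    rw [← hq, show q = ((q.1 : ℕ), false) from by rw [← hb], eTail_false, h1, lo4] at hz
    exact absurd hz (by simp)
  · have hH : (seFlow B vi vc e0 e2 e3).lo q.1 = some (Nat.pair 4 ε) := by
      rw [← eHead_true (seFlow B vi vc e0 e2 e3) q.1]
      rw [show ((q.1 : ℕ), true) = q from by rw [← hb]]
      exact hend
    rw [exp_last]
    rcases lo_eq4 ctx.he2 ctx.h02 (Ne.symm ctx.h23) q.1 ε hqE hH with ⟨hq1, hε2, -⟩ |
      ⟨hq1, hε3, -⟩ | ⟨hq1, hε2, -⟩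
    · rw [if_neg (by rw [hq1]; simp [Nat.pair_eq_pair]; intro h; exact absurd h hε2), hq1,
        Nat.unpair_pair]
    · rw [if_neg (by rw [hq1]; simp [Nat.pair_eq_pair]), hq1, Nat.unpair_pair]
    · rw [if_pos hq1, hb]
      simp [hε2]

end EDGES

end SE15
namespace SE15

lemma nodup_getD_inj {w : List (ℕ × Bool)} (hnd : (w.map Prod.fst).Nodup) {i j : ℕ}
    (hi : i < w.length) (hj : j < w.length)
    (he : (w.getD i pdf).1 = (w.getD j pdf).1) : i = j := by
  have hinj := List.nodup_iff_injective_get.1 hnd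
  have hgi : (w.map Prod.fst).get ⟨i, by simpa using hi⟩ = (w.getD i pdf).1 := by
    rw [List.get_eq_getElem, ← List.getD_eq_getElem (w.map Prod.fst) 0 (by simpa using hi),
      getD_map_fst w i hi]
  have hgj : (w.map Prod.fst).get ⟨j, by simpa using hj⟩ = (w.getD j pdf).1 := by
    rw [List.get_eq_getElem, ← List.getD_eq_getElem (w.map Prod.fst) 0 (by simpa using hj),
      getD_map_fst w j hj]
  have := hinj (a₁ := ⟨i, by simpa using hi⟩) (a₂ := ⟨j, by simpa using hj⟩)
    (by rw [hgi, hgj]; exact he)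
  simpa using this

end SE15


/-- If an atomic flow `B` is cycle-free and `B →se C`,
then `C` is cycle-free. -/
theorem statement_15 (B C : PreFlow) (hB : B.IsFlow) (hcf : CycleFree B)
    (h : RedSE B C) : CycleFree C := by
  intro hcyc
  obtain ⟨v, l, hvC, hpath, hnodup⟩ := hcyc
  obtain ⟨vi, vc, e0, e2, e3, hvi, hvc, hvivc, hηi, hηc, he0, he2, he3, h02, h03, h23,
    hu0, hl0, hu2, hl3, ⟨I⟩⟩ := h
  have ctx : SE15.SECtx B vi vc e0 e2 e3 :=
    ⟨hvi, hvc, hηi, hηc, he0, he2, he3, h02, h03, h23, hu0, hl0, hu2, hl3⟩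
  obtain ⟨w, hwl, hdwC⟩ := SE15.aipath_dw hpath
  have hdwS := SE15.iso_dw I hdwC
  set w' := w.map (fun p => (I.emap p.1, p.2)) with hw'
  have hv'S : I.vmap v ∈ (seFlow B vi vc e0 e2 e3).V := by
    have := I.vbij.mapsTo (show v ∈ (C.V : Set ℕ) by exact_mod_cast hvC)
    exact_mod_cast this
  have hnd' : (w'.map Prod.fst).Nodup := by
    refine SE15.iso_nodup I (fun p hp => hdwC.2.1 p hp) ?_
    rw [hwl]
    exact hnodup
  rcases SE15.memV (I.vmap v) hv'S with ⟨u, hu, h01⟩ | h2 | h2 |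
    ⟨ε, hεE, hεu, h3⟩ | ⟨ε, hεE, hεl, h4⟩
  · -- the cycle vertex is a copy vertex
    obtain ⟨t, ht01, hveq⟩ : ∃ t, (t = 0 ∨ t = 1) ∧ I.vmap v = Nat.pair t u := by
      rcases h01 with h' | h'
      exacts [⟨0, Or.inl rfl, h'⟩, ⟨1, Or.inr rfl, h'⟩]
    rw [hveq] at hdwS
    have hne2 : (Nat.unpair (Nat.pair t u)).1 ≠ 2 := by
      rcases ht01 with rfl | rfl <;> simp [Nat.unpair_pair]
    have hBdw := SE15.core_map ctx w' _ _ hne2 hne2 hdwS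
    have hpv : SE15.pv (Nat.pair t u) = .ver u := by
      rcases ht01 with rfl | rfl
      exacts [SE15.pv0 u, SE15.pv1 u]
    rw [hpv] at hBdw
    have huB : u ∈ B.V := Finset.mem_of_mem_erase (Finset.mem_of_mem_erase hu)
    exact hcf (SE15.dw_cycle _ _ u le_rfl huB hBdw)
  · -- the cycle vertex is the new weakening vertex : impossible
    rw [h2] at hdwS
    obtain ⟨hne, hmem, hlink, hstart, hend⟩ := hdwS
    have hwpos : 0 < w'.length := List.length_pos_iff.2 hne
    set p := w'.getD 0 SE15.pdf with hp
    set q := w'.getD (w'.length - 1) SE15.pdf with hq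
    have hpE : p.1 ∈ (seFlow B vi vc e0 e2 e3).E := hmem p (SE15.getD_mem' w' 0 hwpos)
    have hqE : q.1 ∈ (seFlow B vi vc e0 e2 e3).E := hmem q (SE15.getD_mem' w' _ (by omega))
    cases hb : p.2
    · have hT : (seFlow B vi vc e0 e2 e3).lo p.1 = some (Nat.pair 2 0) := by
        rw [← SE15.eTail_false (seFlow B vi vc e0 e2 e3) p.1]
        rw [show ((p.1 : ℕ), false) = p from by rw [← hb]]
        exact hstart
      have := (SE15.lo_eq2 ctx.he2 ctx.h02 (Ne.symm ctx.h23) p.1 0 hpE hT).2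
      omega
    · have hT : (seFlow B vi vc e0 e2 e3).up p.1 = some (Nat.pair 2 0) := by
        rw [← SE15.eTail_true (seFlow B vi vc e0 e2 e3) p.1]
        rw [show ((p.1 : ℕ), true) = p from by rw [← hb]]
        exact hstart
      have hp1 := (SE15.up_eq2 ctx.he2 ctx.h02 p.1 0 hpE hT).1
      cases hbq : q.2
      · have hH : (seFlow B vi vc e0 e2 e3).up q.1 = some (Nat.pair 2 0) := by
          rw [← SE15.eHead_false (seFlow B vi vc e0 e2 e3) q.1]
          rw [show ((q.1 : ℕ), false) = q from by rw [← hbq]]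
          exact hend
        have hq1 := (SE15.up_eq2 ctx.he2 ctx.h02 q.1 0 hqE hH).1
        have h0l : (0 : ℕ) = w'.length - 1 :=
          SE15.nodup_getD_inj hnd' hwpos (by omega) (by rw [← hp, ← hq, hp1, hq1])
        have hpq : p = q := by rw [hp, hq, ← h0l]
        rw [hpq, hbq] at hb
        exact absurd hb (by simp)
      · have hH : (seFlow B vi vc e0 e2 e3).lo q.1 = some (Nat.pair 2 0) := by
          rw [← SE15.eHead_true (seFlow B vi vc e0 e2 e3) q.1]
          rw [show ((q.1 : ℕ), true) = q from by rw [← hbq]]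
          exact hend
        have := (SE15.lo_eq2 ctx.he2 ctx.h02 (Ne.symm ctx.h23) q.1 0 hqE hH).2
        omega
  · -- the cycle vertex is the new coweakening vertex : impossible
    rw [h2] at hdwS
    obtain ⟨hne, hmem, hlink, hstart, hend⟩ := hdwS
    have hwpos : 0 < w'.length := List.length_pos_iff.2 hne
    set p := w'.getD 0 SE15.pdf with hp
    set q := w'.getD (w'.length - 1) SE15.pdf with hq
    have hpE : p.1 ∈ (seFlow B vi vc e0 e2 e3).E := hmem p (SE15.getD_mem' w' 0 hwpos)
    have hqE : q.1 ∈ (seFlow B vi vc e0 e2 e3).E := hmem q (SE15.getD_mem' w' _ (by omega))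
    cases hb : p.2
    · have hT : (seFlow B vi vc e0 e2 e3).lo p.1 = some (Nat.pair 2 1) := by
        rw [← SE15.eTail_false (seFlow B vi vc e0 e2 e3) p.1]
        rw [show ((p.1 : ℕ), false) = p from by rw [← hb]]
        exact hstart
      have hp1 := (SE15.lo_eq2 ctx.he2 ctx.h02 (Ne.symm ctx.h23) p.1 1 hpE hT).1
      cases hbq : q.2
      · have hH : (seFlow B vi vc e0 e2 e3).up q.1 = some (Nat.pair 2 1) := by
          rw [← SE15.eHead_false (seFlow B vi vc e0 e2 e3) q.1]
          rw [show ((q.1 : ℕ), false) = q from by rw [← hbq]]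
          exact hend
        have := (SE15.up_eq2 ctx.he2 ctx.h02 q.1 1 hqE hH).2
        omega
      · have hH : (seFlow B vi vc e0 e2 e3).lo q.1 = some (Nat.pair 2 1) := by
          rw [← SE15.eHead_true (seFlow B vi vc e0 e2 e3) q.1]
          rw [show ((q.1 : ℕ), true) = q from by rw [← hbq]]
          exact hend
        have hq1 := (SE15.lo_eq2 ctx.he2 ctx.h02 (Ne.symm ctx.h23) q.1 1 hqE hH).1
        have h0l : (0 : ℕ) = w'.length - 1 :=
          SE15.nodup_getD_inj hnd' hwpos (by omega) (by rw [← hp, ← hq, hp1, hq1])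
        have hpq : p = q := by rw [hp, hq, ← h0l]
        rw [hpq, hbq] at hb
        exact absurd hb (by simp)
    · have hT : (seFlow B vi vc e0 e2 e3).up p.1 = some (Nat.pair 2 1) := by
        rw [← SE15.eTail_true (seFlow B vi vc e0 e2 e3) p.1]
        rw [show ((p.1 : ℕ), true) = p from by rw [← hb]]
        exact hstart
      have := (SE15.up_eq2 ctx.he2 ctx.h02 p.1 1 hpE hT).2
      omega
  · -- the cycle vertex is a new cocontraction vertex
    rw [h3] at hdwS
    have hne2 : (Nat.unpair (Nat.pair 3 ε)).1 ≠ 2 := by simp [Nat.unpair_pair]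
    have hBdw := SE15.core_map ctx w' _ _ hne2 hne2 hdwS
    rw [SE15.pv3] at hBdw
    have hL0 : ((SE15.trans e0 e2 e3 w').getD 0 SE15.pdf).1 = ε := by
      rw [SE15.trans_head' e0 e2 e3 hdwS.1]
      exact SE15.first_edge_top ctx hdwS
    have hLl : ((SE15.trans e0 e2 e3 w').getD ((SE15.trans e0 e2 e3 w').length - 1)
        SE15.pdf).1 = ε := by
      rw [SE15.trans_last e0 e2 e3 w' hdwS.1]
      exact SE15.last_edge_top ctx hdwS
    obtain ⟨u, w'', huB, hdd⟩ := SE15.trim_top hBdw (hL0.trans hLl.symm)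
    exact hcf (SE15.dw_cycle _ _ u le_rfl huB hdd)
  · -- the cycle vertex is a new contraction vertex
    rw [h4] at hdwS
    have hne2 : (Nat.unpair (Nat.pair 4 ε)).1 ≠ 2 := by simp [Nat.unpair_pair]
    have hBdw := SE15.core_map ctx w' _ _ hne2 hne2 hdwS
    rw [SE15.pv4] at hBdw
    have hL0 : ((SE15.trans e0 e2 e3 w').getD 0 SE15.pdf).1 = ε := by
      rw [SE15.trans_head' e0 e2 e3 hdwS.1]
      exact SE15.first_edge_bot ctx hdwS
    have hLl : ((SE15.trans e0 e2 e3 w').getD ((SE15.trans e0 e2 e3 w').length - 1)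
        SE15.pdf).1 = ε := by
      rw [SE15.trans_last e0 e2 e3 w' hdwS.1]
      exact SE15.last_edge_bot ctx hdwS
    obtain ⟨u, w'', huB, hdd⟩ := SE15.trim_bot hBdw (hL0.trans hLl.symm)
    exact hcf (SE15.dw_cycle _ _ u le_rfl huB hdd)


end AF
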